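/- arXiv:1708.01457 — 2 statements merged into one kernel-verified Lean document; each statement's English description precedes it below -/
import Mathlib

section
/- A maximum-size cycle graph planarly polygon-embeddable in a convex polygon with n ≥ 4 vertices has exactly ⌊n/2⌋ nodes. -/
open Set Function

/-- Points in the plane. -/
abbrev Pt : Type := ℝ × ℝ

/-- The closed straight-line segment between two points. -/
def seg (a b : Pt) : Set Pt := segment ℝ a b

/-- Two vertex indices of an `n`-gon are adjacent (consecutive in the cyclic order). -/
def adjV {n : ℕ} [NeZero n] (i j : Fin n) : Prop := j = i + 1 ∨ i = j + 1

/-- The `i`-th boundary edge of the polygon with vertices `p`. -/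
def edgeSeg {n : ℕ} [NeZero n] (p : Fin n → Pt) (i : Fin n) : Set Pt := seg (p i) (p (i + 1))

/-- Two segments are non-crossing: they meet at most in shared endpoints. -/
def NC (a b c d : Pt) : Prop := seg a b ∩ seg c d ⊆ ({a, b} ∩ {c, d} : Set Pt)

/-- A simple polygon: at least 3 distinct vertices, and boundary edges meet only at
shared endpoints. -/
def IsSimplePolygon {n : ℕ} [NeZero n] (p : Fin n → Pt) : Prop :=
  3 ≤ n ∧ Function.Injective p ∧
    ∀ i j : Fin n, i ≠ j →
      edgeSeg p i ∩ edgeSeg p j ⊆ ({p i, p (i + 1)} ∩ {p j, p (j + 1)} : Set Pt)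

/-- A convex polygon: a simple polygon whose vertices are in convex position. -/
def IsConvexPolygon {n : ℕ} [NeZero n] (p : Fin n → Pt) : Prop :=
  IsSimplePolygon p ∧ ConvexIndependent ℝ p

/-- `K` is the closed region bounded by the polygon `p`. -/
def IsRegionOf {n : ℕ} [NeZero n] (p : Fin n → Pt) (K : Set Pt) : Prop :=
  IsCompact K ∧ closure (interior K) = K ∧ frontier K = ⋃ i, edgeSeg p i

/-- Vertex `a` and vertex `b` are visible from each other: the segment joining them does not
cross the polygon boundary (it meets each boundary edge only in shared endpoints). -/
def Visible {n : ℕ} [NeZero n] (p : Fin n → Pt) (a b : Fin n) : Prop :=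
  ∀ i : Fin n, seg (p a) (p b) ∩ edgeSeg p i ⊆ ({p a, p b} ∩ {p i, p (i + 1)} : Set Pt)

/-- Cross product of `b - a` and `c - a`. -/
def cross2 (a b c : Pt) : ℝ := (b.1 - a.1) * (c.2 - a.2) - (b.2 - a.2) * (c.1 - a.1)

/-- The vertices are listed counterclockwise (positive signed area). -/
def IsCCW {n : ℕ} [NeZero n] (p : Fin n → Pt) : Prop :=
  0 < ∑ i : Fin n, ((p i).1 * (p (i + 1)).2 - (p (i + 1)).1 * (p i).2)

/-- Vertex `i` of a counterclockwise polygon is reflex (interior angle greater than `π`). -/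
def IsReflex {n : ℕ} [NeZero n] (p : Fin n → Pt) (i : Fin n) : Prop :=
  cross2 (p (i - 1)) (p i) (p (i + 1)) < 0

/-- A pseudo-convex polygon: a simple (counterclockwise) polygon with no two consecutive
reflex vertices. -/
def IsPseudoConvex {n : ℕ} [NeZero n] (p : Fin n → Pt) : Prop :=
  IsSimplePolygon p ∧ IsCCW p ∧ ∀ i : Fin n, ¬ (IsReflex p i ∧ IsReflex p (i + 1))

/-- The set of vertices visible from `i`, together with `i` and its two boundary neighbours. -/
def visSet {n : ℕ} [NeZero n] (p : Fin n → Pt) (i : Fin n) : Set (Fin n) :=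
  {j | Visible p i j ∨ j = i - 1 ∨ j = i ∨ j = i + 1}

/-- Vertex `i` is isolated: it sees fewer than five vertices (counting itself and its two
neighbours), or exactly five and the two visible non-neighbours are adjacent to each other. -/
def IsIsolated {n : ℕ} [NeZero n] (p : Fin n → Pt) (i : Fin n) : Prop :=
  (visSet p i).ncard < 5 ∨
  ((visSet p i).ncard = 5 ∧
    ∀ u ∈ visSet p i, ∀ w ∈ visSet p i,
      u ∉ ({i - 1, i, i + 1} : Set (Fin n)) → w ∉ ({i - 1, i, i + 1} : Set (Fin n)) →
      u ≠ w → adjV u w)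

/-- A straight-line planar polygon embedding of the cycle graph on `m` nodes into the polygon
`p` with bounded region `K`: nodes map injectively to polygon vertices, every cycle edge is a
diagonal of the polygon (endpoints non-adjacent, hence not a polygon edge) lying inside `K`,
distinct cycle edges meet at most in shared endpoints, and cycle edges meet boundary edges at
most in shared endpoints. -/
def IsCycleEmbedding {n m : ℕ} [NeZero n] [NeZero m] (p : Fin n → Pt) (K : Set Pt)
    (f : Fin m → Fin n) : Prop :=
  Function.Injective f ∧
  (∀ k : Fin m, ¬ adjV (f k) (f (k + 1))) ∧
  (∀ k : Fin m, seg (p (f k)) (p (f (k + 1))) ⊆ K) ∧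
  (∀ k l : Fin m, ({p (f k), p (f (k + 1))} : Set Pt) ≠ ({p (f l), p (f (l + 1))} : Set Pt) →
    NC (p (f k)) (p (f (k + 1))) (p (f l)) (p (f (l + 1)))) ∧
  (∀ k : Fin m, ∀ i : Fin n,
    seg (p (f k)) (p (f (k + 1))) ∩ edgeSeg p i ⊆
      ({p (f k), p (f (k + 1))} ∩ {p i, p (i + 1)} : Set Pt))

set_option linter.unusedSectionVars false
set_option linter.unnecessarySeqFocus false
set_option linter.unreachableTactic false
set_option linter.unusedTactic false
set_option maxHeartbeats 1000000

lemma seg_symm (a b : Pt) : seg a b = seg b a := segment_symm ℝ a b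

lemma cross2_rot (a b c : Pt) : cross2 a b c = cross2 b c a := by
  simp only [cross2]; ring

lemma cross2_swap (a b c : Pt) : cross2 a c b = -cross2 a b c := by
  simp only [cross2]; ring

lemma cross2_self (a c : Pt) : cross2 a a c = 0 := by simp [cross2]

lemma cross2_self' (a b : Pt) : cross2 a b b = 0 := by simp only [cross2]; ring

lemma smul_fst (t : ℝ) (x : Pt) : (t • x).1 = t * x.1 := rfl
lemma smul_snd (t : ℝ) (x : Pt) : (t • x).2 = t * x.2 := rfl
lemma add_fst (x y : Pt) : (x + y).1 = x.1 + y.1 := rfl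
lemma add_snd (x y : Pt) : (x + y).2 = x.2 + y.2 := rfl

lemma mem_seg_iff {x a b : Pt} :
    x ∈ seg a b ↔ ∃ t : ℝ, 0 ≤ t ∧ t ≤ 1 ∧ x = (1-t) • a + t • b := by
  rw [seg, segment_eq_image]
  constructor
  · rintro ⟨t, ⟨h0, h1⟩, rfl⟩; exact ⟨t, h0, h1, rfl⟩
  · rintro ⟨t, h0, h1, rfl⟩; exact ⟨t, ⟨h0, h1⟩, rfl⟩

lemma combo_mem_seg {a b : Pt} {t : ℝ} (h0 : 0 ≤ t) (h1 : t ≤ 1) :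
    (1-t) • a + t • b ∈ seg a b := mem_seg_iff.mpr ⟨t, h0, h1, rfl⟩

lemma cross2_combo (a b c d : Pt) (t : ℝ) :
    cross2 a b ((1-t) • c + t • d) = (1-t) * cross2 a b c + t * cross2 a b d := by
  simp only [cross2, add_fst, add_snd, smul_fst, smul_snd]; ring

lemma cross2_of_mem_seg {x a b : Pt} (h : x ∈ seg a b) : cross2 a b x = 0 := by
  obtain ⟨t, h0, h1, rfl⟩ := mem_seg_iff.mp h
  rw [cross2_combo, cross2_self', cross2_swap, cross2_self]; ring

/-- same strict side ⇒ disjoint -/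
lemma same_side_disjoint {a b c d : Pt} (h : 0 < cross2 a b c * cross2 a b d) :
    seg a b ∩ seg c d = ∅ := by
  ext x
  simp only [Set.mem_inter_iff, Set.mem_empty_iff_false, iff_false, not_and]
  intro hx1 hx2
  obtain ⟨t, h0, h1, rfl⟩ := mem_seg_iff.mp hx2
  have h2 : cross2 a b ((1-t) • c + t • d) = 0 := cross2_of_mem_seg hx1
  rw [cross2_combo] at h2
  rcases mul_pos_iff.mp h with ⟨p1, p2⟩ | ⟨p1, p2⟩ <;>
    rcases eq_or_lt_of_le h0 with h3 | h3
  · rw [← h3] at h2; simp at h2; linarith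
  · nlinarith [mul_pos h3 p2, mul_nonneg (sub_nonneg.mpr h1) p1.le]
  · rw [← h3] at h2; simp at h2; linarith
  · nlinarith [mul_neg_of_pos_of_neg h3 p2, mul_nonpos_of_nonneg_of_nonpos (sub_nonneg.mpr h1) p1.le]

lemma exists_param_of_cross2_zero {c d x : Pt} (h : cross2 c d x = 0) (hcd : c ≠ d) :
    ∃ t : ℝ, x = (1-t) • c + t • d := by
  simp only [cross2] at h
  have hcd2 : d.1 - c.1 ≠ 0 ∨ d.2 - c.2 ≠ 0 := by
    by_contra hc; push_neg at hc
    exact hcd (Prod.ext (by linarith [hc.1]) (by linarith [hc.2]))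
  rcases hcd2 with h1 | h1
  · refine ⟨(x.1 - c.1)/(d.1 - c.1), Prod.ext ?_ ?_⟩ <;>
      simp only [add_fst, add_snd, smul_fst, smul_snd] <;> field_simp <;> ring_nf <;>
      ring_nf at h <;> nlinarith [h]
  · refine ⟨(x.2 - c.2)/(d.2 - c.2), Prod.ext ?_ ?_⟩ <;>
      simp only [add_fst, add_snd, smul_fst, smul_snd] <;> field_simp <;> ring_nf <;>
      ring_nf at h <;> nlinarith [h]

/-- opposite strict sides both ways ⇒ segments intersect -/
lemma crossing_of_signs {a b c d : Pt} (h1 : cross2 a b c * cross2 a b d < 0)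
    (h2 : cross2 c d a * cross2 c d b < 0) : (seg a b ∩ seg c d).Nonempty := by
  set Ma := cross2 c d a with hMa
  set Mb := cross2 c d b with hMb
  have hne : Ma - Mb ≠ 0 := by
    rcases mul_neg_iff.mp h2 with ⟨p1, p2⟩ | ⟨p1, p2⟩ <;> intro hc <;> nlinarith
  set u := Ma / (Ma - Mb) with hu
  have hu0 : 0 ≤ u ∧ u ≤ 1 := by
    rcases mul_neg_iff.mp h2 with ⟨p1, p2⟩ | ⟨p1, p2⟩
    · have hd : 0 < Ma - Mb := by linarith
      exact ⟨div_nonneg p1.le hd.le, by rw [hu, div_le_one hd]; linarith⟩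
    · have hd : Ma - Mb < 0 := by linarith
      refine ⟨div_nonneg_of_nonpos p1.le hd.le, ?_⟩
      rw [hu, div_le_one_iff]
      right; right; exact ⟨hd, by linarith⟩
  set x := (1-u) • a + u • b with hx
  have hxab : x ∈ seg a b := combo_mem_seg hu0.1 hu0.2
  have hxcd0 : cross2 c d x = 0 := by
    rw [hx, cross2_combo, ← hMa, ← hMb, hu]
    field_simp
    ring
  have hcd : c ≠ d := by
    intro hc
    have hz : Ma = 0 := by rw [hMa, hc, cross2_self]
    rw [hz] at h2; simp at h2
  obtain ⟨t, hxt⟩ := exists_param_of_cross2_zero hxcd0 hcd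
  have habx : cross2 a b x = 0 := cross2_of_mem_seg hxab
  rw [hxt, cross2_combo] at habx
  set Lc := cross2 a b c
  set Ld := cross2 a b d
  have ht : 0 ≤ t ∧ t ≤ 1 := by
    rcases mul_neg_iff.mp h1 with ⟨p1, p2⟩ | ⟨p1, p2⟩ <;> constructor <;> nlinarith
  exact ⟨x, hxab, hxt ▸ combo_mem_seg ht.1 ht.2⟩

/-- segments sharing endpoint a meet only at a when not collinear -/
lemma shared_endpoint {a b c : Pt} (h : cross2 a b c ≠ 0) :
    seg a b ∩ seg a c ⊆ {a} := by
  rintro x ⟨hx1, hx2⟩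
  obtain ⟨s, hs0, hs1, rfl⟩ := mem_seg_iff.mp hx1
  obtain ⟨t, ht0, ht1, hteq⟩ := mem_seg_iff.mp hx2
  simp only [Set.mem_singleton_iff]
  by_cases hs : s = 0
  · rw [hs]; simp
  · exfalso
    have ht : t ≠ 0 := by
      intro hc; rw [hc] at hteq; simp at hteq
      apply h
      have hsba : s • b - s • a = 0 := by
        calc s • b - s • a = ((1-s) • a + s • b) - a := by module
        _ = 0 := by rw [hteq]; abel
      have hba : b = a := by
        have h2 : s • (b - a) = 0 := by rw [smul_sub]; exact hsba
        rcases smul_eq_zero.mp h2 with h3 | h3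
        · exact absurd h3 hs
        · exact sub_eq_zero.mp h3
      rw [hba, cross2_self]
    apply h
    have e1 := congrArg Prod.fst hteq
    have e2 := congrArg Prod.snd hteq
    simp only [add_fst, add_snd, smul_fst, smul_snd] at e1 e2
    have e3 : s * (b.1 - a.1) = t * (c.1 - a.1) := by linear_combination e1
    have e4 : s * (b.2 - a.2) = t * (c.2 - a.2) := by linear_combination e2
    have hz : s * cross2 a b c = 0 := by
      simp only [cross2]
      linear_combination (c.2 - a.2) * e3 - (c.1 - a.1) * e4
    rcases mul_eq_zero.mp hz with h5 | h5
    · exact absurd h5 hs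
    · exact h5

lemma between_of_param {a b c : Pt} (t : ℝ) (h : c = (1-t) • a + t • b) :
    (c ∈ seg a b) ∨ (t < 0 ∧ a ∈ seg c b) ∨ (1 < t ∧ b ∈ seg a c) := by
  rcases le_or_gt 0 t with h0 | h0
  · rcases le_or_gt t 1 with h1 | h1
    · left; rw [h]; exact combo_mem_seg h0 h1
    · right; right
      refine ⟨h1, ?_⟩
      have ht : t ≠ 0 := by linarith
      have hb : b = (1 - 1/t) • a + (1/t) • c := by
        rw [h]; apply Prod.ext <;> simp only [add_fst, add_snd, smul_fst, smul_snd] <;>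
          field_simp <;> ring
      rw [hb]
      exact combo_mem_seg (by positivity) (by rw [div_le_one (by linarith)]; linarith)
  · right; left
    refine ⟨h0, ?_⟩
    have ht : (1:ℝ) - t ≠ 0 := by linarith
    have ha : a = (1 - (-t/(1-t))) • c + (-t/(1-t)) • b := by
      rw [h]; apply Prod.ext <;> simp only [add_fst, add_snd, smul_fst, smul_snd] <;>
        field_simp <;> ring
    rw [ha]
    refine combo_mem_seg (div_nonneg (by linarith) (by linarith)) ?_
    rw [div_le_one (by linarith)]; linarith

section Poly
variable {n : ℕ} [NeZero n] {p : Fin n → Pt}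

lemma not_collinear (hI : ConvexIndependent ℝ p) {a b c : Fin n}
    (hab : a ≠ b) (hac : a ≠ c) (hbc : b ≠ c) : cross2 (p a) (p b) (p c) ≠ 0 := by
  intro h0
  have hinj := hI.injective
  have hpab : p a ≠ p b := fun hc => hab (hinj hc)
  obtain ⟨t, ht⟩ := exists_param_of_cross2_zero h0 hpab
  have hseg : ∀ (x y z : Fin n), p x ∈ seg (p y) (p z) → x = y ∨ x = z := by
    intro x y z hx
    have : p x ∈ convexHull ℝ (p '' {y, z}) := by
      rw [Set.image_pair, convexHull_pair]; exact hx
    have := hI {y, z} x this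
    simpa using this
  rcases between_of_param t ht with hc | ⟨_, hc⟩ | ⟨_, hc⟩
  · rcases hseg c a b hc with h | h
    · exact hac h.symm
    · exact hbc h.symm
  · rcases hseg a c b hc with h | h
    · exact hac h
    · exact hab h
  · rcases hseg b a c hc with h | h
    · exact hab h.symm
    · exact hbc h
end Poly

lemma mem_hull_triangle {q u v w : Pt} (hK : 0 < cross2 q u w) (h1 : 0 < cross2 v u w)
    (h2 : 0 < cross2 q v w) (h3 : 0 < cross2 q u v) : v ∈ convexHull ℝ ({q, u, w} : Set Pt) := by
  set c1 := cross2 v u w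
  set c2 := cross2 q v w
  set c3 := cross2 q u v
  set K := cross2 q u w
  have hsum : c1 + c2 + c3 = K := by simp only [c1, c2, c3, K, cross2]; ring
  have key1 : K * v.1 = c1 * q.1 + c2 * u.1 + c3 * w.1 := by
    simp only [c1, c2, c3, K, cross2]; ring
  have key2 : K * v.2 = c1 * q.2 + c2 * u.2 + c3 * w.2 := by
    simp only [c1, c2, c3, K, cross2]; ring
  have h23 : 0 < c2 + c3 := by linarith
  have hKne : K ≠ 0 := ne_of_gt hK
  set z : Pt := (1 - c3/(c2+c3)) • u + (c3/(c2+c3)) • w with hz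
  have hzmem : z ∈ seg u w := combo_mem_seg (by positivity) (by rw [div_le_one h23]; linarith)
  have hcvx : Convex ℝ (convexHull ℝ ({q, u, w} : Set Pt)) := convex_convexHull ℝ _
  have hq : q ∈ convexHull ℝ ({q, u, w} : Set Pt) := subset_convexHull ℝ _ (by simp)
  have hu : u ∈ convexHull ℝ ({q, u, w} : Set Pt) := subset_convexHull ℝ _ (by simp)
  have hw : w ∈ convexHull ℝ ({q, u, w} : Set Pt) := subset_convexHull ℝ _ (by simp)
  have hzin : z ∈ convexHull ℝ ({q, u, w} : Set Pt) := hcvx.segment_subset hu hw hzmem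
  have hveq : v = (1 - (c2+c3)/K) • q + ((c2+c3)/K) • z := by
    rw [hz]
    apply Prod.ext
    · simp only [add_fst, smul_fst]
      field_simp
      linear_combination key1 + q.1 * hsum
    · simp only [add_snd, smul_snd]
      field_simp
      linear_combination key2 + q.2 * hsum
  have hvmem : v ∈ seg q z :=
    hveq ▸ combo_mem_seg (by positivity) (by rw [div_le_one hK]; linarith)
  exact hcvx.segment_subset hq hzin hvmem


open Set Function
open scoped Fin.NatCast Fin.CommRing

variable {n : ℕ} [NeZero n]

/-- ccw distance from a to b -/
def fd (a b : Fin n) : ℕ := (b - a).val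

lemma fd_eq (a b : Fin n) : fd a b = if a.val ≤ b.val then b.val - a.val else b.val + n - a.val := by
  have ha := a.isLt; have hb := b.isLt
  have h : fd a b = (n - a.val + b.val) % n := by
    simp [fd, Fin.sub_def]
  rcases le_or_gt a.val b.val with h1 | h1
  · have : n - a.val + b.val = (b.val - a.val) + n := by omega
    rw [h, this, Nat.add_mod_right, Nat.mod_eq_of_lt (by omega)]
    simp [h1]
  · have : (n - a.val + b.val) < n := by omega
    rw [h, Nat.mod_eq_of_lt this]
    have : ¬ a.val ≤ b.val := by omega
    simp [this]; omega

lemma fd_lt (a b : Fin n) : fd a b < n := (b - a).isLt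

lemma fd_self (a : Fin n) : fd a a = 0 := by simp [fd_eq]

lemma fd_eq_zero_iff {a b : Fin n} : fd a b = 0 ↔ a = b := by
  rw [fd_eq]; have := a.isLt; have := b.isLt
  constructor
  · intro h; apply Fin.ext; split at h <;> omega
  · rintro rfl; simp

lemma fd_pos_of_ne {a b : Fin n} (h : a ≠ b) : 0 < fd a b :=
  Nat.pos_of_ne_zero (fun hc => h (fd_eq_zero_iff.mp hc))

lemma fd_inj {a b c : Fin n} (h : fd a b = fd a c) : b = c := by
  rw [fd_eq, fd_eq] at h
  have := a.isLt; have := b.isLt; have := c.isLt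
  apply Fin.ext; split at h <;> split at h <;> omega

lemma fd_add_fd (a b : Fin n) (h : a ≠ b) : fd a b + fd b a = n := by
  rw [fd_eq, fd_eq]
  have h1 := a.isLt; have h2 := b.isLt
  have h3 : a.val ≠ b.val := fun hc => h (Fin.ext hc)
  split_ifs <;> omega

lemma fd_trans (a b c : Fin n) : fd a c = (fd a b + fd b c) % n := by
  have : (c - a) = (b - a) + (c - b) := by ring
  rw [fd, this, Fin.val_add]; rfl

/-- key omega-friendly form -/
lemma fd_trans' (a b c : Fin n) :
    fd a c = fd a b + fd b c ∨ (fd a c + n = fd a b + fd b c ∧ n ≤ fd a b + fd b c) := by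
  have h := fd_trans a b c
  have h1 := fd_lt a b; have h2 := fd_lt b c; have h3 := fd_lt a c
  rcases lt_or_ge (fd a b + fd b c) n with hl | hl
  · left; rw [h, Nat.mod_eq_of_lt hl]
  · right
    have : fd a b + fd b c - n < n := by omega
    have he : (fd a b + fd b c) % n = fd a b + fd b c - n := by
      rw [Nat.mod_eq_sub_mod hl, Nat.mod_eq_of_lt this]
    omega

/-- b strictly inside ccw arc from a to c -/
def cyc (a b c : Fin n) : Prop := 0 < fd a b ∧ fd a b < fd a c

lemma cyc_ne {a b c : Fin n} (h : cyc a b c) :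
    a ≠ b ∧ b ≠ c ∧ a ≠ c := by
  obtain ⟨h1, h2⟩ := h
  refine ⟨fun hc => by simp [← hc, fd_self] at h1, fun hc => by simp [hc] at h2, fun hc => ?_⟩
  rw [← hc, fd_self] at h2; omega

lemma cyc_rot {a b c : Fin n} (h : cyc a b c) : cyc b c a := by
  obtain ⟨h1, h2⟩ := h
  obtain ⟨hab, hbc, hac⟩ := cyc_ne ⟨h1, h2⟩
  have e1 := fd_add_fd a b hab
  have e2 := fd_add_fd a c hac
  have e3 := fd_trans' a b c
  have e4 := fd_trans' b c a
  have := fd_lt b c; have := fd_lt c a; have := fd_lt a c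
  constructor <;> omega

lemma cyc_tricho {a b x : Fin n} (hab : a ≠ b) (hxa : x ≠ a) (hxb : x ≠ b) :
    cyc a x b ∨ cyc b x a := by
  have h1 := fd_pos_of_ne (Ne.symm hxa)
  have h2 := fd_pos_of_ne (Ne.symm (hxb : x ≠ b))
  have h3 : fd a x ≠ fd a b := fun hc => hxb (fd_inj hc.symm ▸ rfl)
  rcases lt_or_gt_of_ne h3 with h | h
  · left; exact ⟨h1, h⟩
  · right
    refine ⟨h2, ?_⟩
    have e1 := fd_add_fd a b hab
    have e2 := fd_trans' a b x
    have e3 := fd_add_fd a x (Ne.symm hxa)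
    have l1 := fd_lt a x; have l2 := fd_lt b x
    omega

lemma cyc_asymm {a b x : Fin n} (h1 : cyc a x b) (h2 : cyc b x a) : False := by
  obtain ⟨p1, q1⟩ := h1; obtain ⟨p2, q2⟩ := h2
  obtain ⟨hax, hxb, hab⟩ := cyc_ne ⟨p1, q1⟩
  have e1 := fd_add_fd a b hab
  have e2 := fd_trans' a b x
  have e3 := fd_lt b x
  omega

lemma fd_add_one (a : Fin n) (hn : 2 ≤ n) : fd a (a + 1) = 1 := by
  have : fd a (a+1) = ((a+1) - a).val := rfl
  rw [this]
  have : (a + 1 - a : Fin n) = 1 := by ring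
  rw [this, Fin.val_one' n, Nat.mod_eq_of_lt hn]

lemma eq_add_one_of_fd_one {a b : Fin n} (hn : 2 ≤ n) (h : fd a b = 1) : b = a + 1 :=
  fd_inj (h.trans (fd_add_one a hn).symm)

lemma arc_empty {a b : Fin n} (hn : 2 ≤ n) (hab : a ≠ b) (h : ∀ x, ¬ cyc a x b) : b = a + 1 := by
  have hpos := fd_pos_of_ne hab
  rcases eq_or_lt_of_le (show 1 ≤ fd a b from hpos) with h1 | h1
  · exact eq_add_one_of_fd_one hn h1.symm
  · exact absurd ⟨by rw [fd_add_one a hn]; omega, by rw [fd_add_one a hn]; omega⟩ (h (a+1))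

lemma fd_add_right (a b v : Fin n) : fd (a + v) (b + v) = fd a b := by
  have h : (b + v) - (a + v) = b - a := by ring
  simp [fd, h]

lemma cyc_of_base {a b c : Fin n} (h1 : 0 < fd a b) (h2 : fd a b < fd a c) : cyc a b c := ⟨h1, h2⟩

/-- middle lemma: c inside arc (a,b), d inside arc (b,a) gives cyc c d a and cyc c b d -/
lemma cyc_mid {a b c d : Fin n} (h1 : cyc a c b) (h2 : cyc b d a) :
    cyc c d a ∧ cyc c b d := by
  obtain ⟨p1, q1⟩ := h1
  obtain ⟨p2, q2⟩ := h2
  obtain ⟨hac, hcb, hab⟩ := cyc_ne ⟨p1, q1⟩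
  obtain ⟨hbd, hda, hba⟩ := cyc_ne ⟨p2, q2⟩
  have e1 := fd_add_fd a b hab
  have e2 := fd_add_fd a c hac
  have e3 := fd_add_fd a d (Ne.symm hda)
  have e4 := fd_trans' a b d
  have e5 := fd_trans' a c d
  have e6 := fd_trans' a c b
  have l1 := fd_lt a b; have l2 := fd_lt a c; have l3 := fd_lt a d
  have l4 := fd_lt c d; have l5 := fd_lt c b; have l6 := fd_lt b d
  constructor <;> constructor <;> omega

-- additional Fin helpers
variable {n : ℕ} [NeZero n]

lemma fd_add (a c : Fin n) : fd a (a + c) = c.val := by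
  have h : (a + c) - a = c := by ring
  simp [fd, h]

lemma add_fd (a b : Fin n) : a + ((fd a b : ℕ) : Fin n) = b := by
  have h : ((fd a b : ℕ) : Fin n) = b - a := Fin.cast_val_eq_self _
  rw [h]; ring

lemma fd_add_left (v a b : Fin n) : fd (v + a) (v + b) = fd a b := by
  rw [add_comm v a, add_comm v b, fd_add_right]

lemma cyc_linear_cases {s t u : Fin n} (h : cyc s t u) :
    (s < t ∧ t < u) ∨ (t < u ∧ u < s) ∨ (u < s ∧ s < t) := by
  obtain ⟨h1, h2⟩ := h
  rw [fd_eq] at h1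
  rw [fd_eq, fd_eq] at h2
  have := s.isLt; have := t.isLt; have := u.isLt
  simp only [Fin.lt_def]
  split_ifs at h1 h2 <;> omega

lemma cyc_rev {a b c : Fin n} (v : Fin n) (h : cyc a b c) : cyc (v - a) (v - c) (v - b) := by
  obtain ⟨hab, hbc, hac⟩ := cyc_ne h
  obtain ⟨h1, h2⟩ := h
  have e1 : fd (v - a) (v - c) = fd c a := by
    have h3 : (v - c) - (v - a) = a - c := by ring
    simp [fd, h3]
  have e2 : fd (v - a) (v - b) = fd b a := by
    have h3 : (v - b) - (v - a) = a - b := by ring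
    simp [fd, h3]
  have e3 := fd_add_fd a c hac
  have e4 := fd_add_fd a b hab
  have := fd_lt a c; have := fd_lt a b
  unfold cyc
  rw [e1, e2]
  constructor <;> omega

lemma fin_one_ne_zero (hm : 2 ≤ n) : (1 : Fin n) ≠ 0 := by
  intro hc
  have := congrArg Fin.val hc
  rw [Fin.val_one' n, Nat.mod_eq_of_lt hm] at this
  simp at this

lemma fin_succ_ne (hm : 2 ≤ n) (k : Fin n) : k + 1 ≠ k := by
  intro hc
  exact fin_one_ne_zero hm (add_eq_left.mp hc)

/-- the walk lemma: a non-crossing cycle has, for each edge, one empty side -/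
lemma walk {m : ℕ} [NeZero m] (hm : 3 ≤ m) (g : Fin m → Fin n) (hg : Function.Injective g)
    (H : ∀ k l : Fin m,
      ¬(cyc (g k) (g l) (g (k+1)) ∧ cyc (g (k+1)) (g (l+1)) (g k)) ∧
      ¬(cyc (g k) (g (l+1)) (g (k+1)) ∧ cyc (g (k+1)) (g l) (g k)))
    (k : Fin m) :
    (∀ j, ¬ cyc (g k) (g j) (g (k+1))) ∨ (∀ j, ¬ cyc (g (k+1)) (g j) (g k)) := by
  by_contra hcon
  push_neg at hcon
  obtain ⟨⟨j1, hj1⟩, j2, hj2⟩ := hcon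
  have hm2 : 2 ≤ m := by omega
  have hkk1 : g k ≠ g (k+1) := fun hc => fin_succ_ne hm2 k (hg hc.symm)
  -- index helpers
  have hidx : ∀ t : ℕ, 2 ≤ t → t ≤ m - 1 →
      (k + (t : Fin m) ≠ k ∧ k + (t : Fin m) ≠ k + 1) := by
    intro t h2 h3
    have hv : ((t : Fin m)).val = t := Fin.val_cast_of_lt (by omega)
    constructor
    · intro hc
      have h0 : (t : Fin m) = 0 := add_eq_left.mp hc
      rw [h0] at hv; simp at hv; omega
    · intro hc
      have h4 : (t : Fin m) = 1 := add_left_cancel hc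
      rw [h4, Fin.val_one' m, Nat.mod_eq_of_lt hm2] at hv; omega
  -- convert j1 j2 to offsets
  obtain ⟨n1, n2, n3⟩ := cyc_ne hj1
  obtain ⟨n4, n5, n6⟩ := cyc_ne hj2
  have hj1k : j1 ≠ k := fun hc => n1 (by rw [hc])
  have hj1k1 : j1 ≠ k + 1 := fun hc => n2 (by rw [hc])
  have hj2k1 : j2 ≠ k + 1 := fun hc => n4 (by rw [hc])
  have hj2k : j2 ≠ k := fun hc => n5 (by rw [hc])
  set t1 := fd k j1 with ht1
  set t2 := fd k j2 with ht2
  have hj1e : k + ((t1 : ℕ) : Fin m) = j1 := add_fd k j1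
  have hj2e : k + ((t2 : ℕ) : Fin m) = j2 := add_fd k j2
  have ht1b : 2 ≤ t1 ∧ t1 ≤ m - 1 := by
    have hlt := fd_lt k j1
    have hne0 : t1 ≠ 0 := fun hc => (hj1k (fd_eq_zero_iff.mp hc).symm)
    have hne1 : t1 ≠ 1 := fun hc => hj1k1 (eq_add_one_of_fd_one hm2 hc)
    omega
  have ht2b : 2 ≤ t2 ∧ t2 ≤ m - 1 := by
    have hlt := fd_lt k j2
    have hne0 : t2 ≠ 0 := fun hc => (hj2k (fd_eq_zero_iff.mp hc).symm)
    have hne1 : t2 ≠ 1 := fun hc => hj2k1 (eq_add_one_of_fd_one hm2 hc)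
    omega
  have hA1 : cyc (g k) (g (k + ((t1:ℕ) : Fin m))) (g (k+1)) := by rw [hj1e]; exact hj1
  have hB2 : cyc (g (k+1)) (g (k + ((t2:ℕ) : Fin m))) (g k) := by rw [hj2e]; exact hj2
  -- successor cast helper
  have hsucc : ∀ t : ℕ, 1 ≤ t → (k + ((t - 1 : ℕ) : Fin m)) + 1 = k + ((t : ℕ) : Fin m) := by
    intro t ht
    rw [add_assoc]
    congr 1
    have h4 : ((t - 1 : ℕ) : Fin m) + 1 = ((t - 1 + 1 : ℕ) : Fin m) := by push_cast; ring
    rw [h4]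
    congr 1
    omega
  -- aux1 : A t1 → B t2 → t1 ≤ t2 → False
  have aux1 : ∀ t2' : ℕ, 2 ≤ t2' → t2' ≤ m - 1 →
      cyc (g (k+1)) (g (k + ((t2':ℕ) : Fin m))) (g k) →
      ∀ t1' : ℕ, 2 ≤ t1' → t1' ≤ t2' →
      cyc (g k) (g (k + ((t1':ℕ) : Fin m))) (g (k+1)) → False := by
    intro t2'
    induction t2' using Nat.strong_induction_on with
    | _ t2' ih =>
      intro h2a h2b hB t1' h1a h12 hA
      rcases eq_or_lt_of_le h12 with rfl | hlt
      · exact cyc_asymm hA hB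
      · by_cases hA2 : cyc (g k) (g (k + ((t2' - 1 : ℕ) : Fin m))) (g (k+1))
        · apply (H k (k + ((t2' - 1 : ℕ) : Fin m))).1
          refine ⟨hA2, ?_⟩
          rw [hsucc t2' (by omega)]
          exact hB
        · obtain ⟨hi1, hi2⟩ := hidx (t2' - 1) (by omega) (by omega)
          have hB2' : cyc (g (k+1)) (g (k + ((t2' - 1 : ℕ) : Fin m))) (g k) := by
            rcases cyc_tricho hkk1 (fun hc => hi1 (hg hc)) (fun hc => hi2 (hg hc)) with h | h
            · exact absurd h hA2
            · exact h
          exact ih (t2' - 1) (by omega) (by omega) (by omega) hB2' t1' h1a (by omega) hA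
  -- aux2 : A t1 → B t2 → t2 ≤ t1 → False
  have aux2 : ∀ t1' : ℕ, 2 ≤ t1' → t1' ≤ m - 1 →
      cyc (g k) (g (k + ((t1':ℕ) : Fin m))) (g (k+1)) →
      ∀ t2' : ℕ, 2 ≤ t2' → t2' ≤ t1' →
      cyc (g (k+1)) (g (k + ((t2':ℕ) : Fin m))) (g k) → False := by
    intro t1'
    induction t1' using Nat.strong_induction_on with
    | _ t1' ih =>
      intro h1a h1b hA t2' h2a h21 hB
      rcases eq_or_lt_of_le h21 with rfl | hlt
      · exact cyc_asymm hA hB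
      · by_cases hB2 : cyc (g (k+1)) (g (k + ((t1' - 1 : ℕ) : Fin m))) (g k)
        · apply (H k (k + ((t1' - 1 : ℕ) : Fin m))).2
          refine ⟨?_, hB2⟩
          rw [hsucc t1' (by omega)]
          exact hA
        · obtain ⟨hi1, hi2⟩ := hidx (t1' - 1) (by omega) (by omega)
          have hA2' : cyc (g k) (g (k + ((t1' - 1 : ℕ) : Fin m))) (g (k+1)) := by
            rcases cyc_tricho hkk1 (fun hc => hi1 (hg hc)) (fun hc => hi2 (hg hc)) with h | h
            · exact h
            · exact absurd h hB2
          exact ih (t1' - 1) (by omega) (by omega) (by omega) hA2' t2' h2a (by omega) hB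
  rcases le_or_gt t1 t2 with h | h
  · exact aux1 t2 ht2b.1 ht2b.2 hB2 t1 ht1b.1 h hA1
  · exact aux2 t1 ht1b.1 ht1b.2 hA1 t2 ht2b.1 h.le hB2

lemma sign_aux {e X Y : ℝ} (he : e = 1 ∨ e = -1) (h1 : 0 < e * X) (h2 : 0 < e * Y) :
    0 < X * Y := by
  rcases he with rfl | rfl
  · rw [one_mul] at h1 h2; exact mul_pos h1 h2
  · have hX : X < 0 := by linarith
    have hY : Y < 0 := by linarith
    exact mul_pos_of_neg_of_neg hX hY

/-- crossing lemma for cyclically interleaved chords -/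
lemma GA {q : Fin n → Pt} {e : ℝ} (he : e = 1 ∨ e = -1)
    (hor : ∀ a b c : Fin n, cyc a b c → 0 < e * cross2 (q a) (q b) (q c))
    {a b c d : Fin n} (h1 : cyc a c b) (h2 : cyc b d a) :
    (seg (q a) (q b) ∩ seg (q c) (q d)).Nonempty := by
  obtain ⟨hm1, hm2⟩ := cyc_mid h1 h2
  have s1 := hor _ _ _ h1
  have s2 := hor _ _ _ (cyc_rot (cyc_rot h2))
  have s3 := hor _ _ _ hm1
  have s4 := hor _ _ _ hm2
  apply crossing_of_signs
  · have hswap : cross2 (q a) (q c) (q b) = -cross2 (q a) (q b) (q c) := cross2_swap _ _ _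
    rw [hswap] at s1
    have h5 : 0 < -cross2 (q a) (q b) (q c) * cross2 (q a) (q b) (q d) :=
      sign_aux he (by linarith) s2
    nlinarith [h5]
  · have hswap : cross2 (q c) (q b) (q d) = -cross2 (q c) (q d) (q b) := cross2_swap _ _ _
    rw [hswap] at s4
    have h5 : 0 < cross2 (q c) (q d) (q a) * -cross2 (q c) (q d) (q b) :=
      sign_aux he s3 (by linarith)
    nlinarith [h5]

/-- separation lemma: both c and d inside the arc (a,b) ⇒ chords disjoint -/
lemma GB {q : Fin n → Pt} {e : ℝ} (he : e = 1 ∨ e = -1)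
    (hor : ∀ a b c : Fin n, cyc a b c → 0 < e * cross2 (q a) (q b) (q c))
    {a b c d : Fin n} (h1 : cyc a c b) (h2 : cyc a d b) :
    seg (q a) (q b) ∩ seg (q c) (q d) = ∅ := by
  have s1 := hor _ _ _ h1
  have s2 := hor _ _ _ h2
  apply same_side_disjoint
  have e1 : cross2 (q a) (q c) (q b) = -cross2 (q a) (q b) (q c) := cross2_swap _ _ _
  have e2 : cross2 (q a) (q d) (q b) = -cross2 (q a) (q b) (q d) := cross2_swap _ _ _
  rw [e1] at s1
  rw [e2] at s2
  have h5 := sign_aux he (X := -cross2 (q a) (q b) (q c)) (Y := -cross2 (q a) (q b) (q d))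
    (by linarith) (by linarith)
  nlinarith [h5]

lemma halfplane_trans {q0 x y z : Pt}
    (hx : 0 < x.1 - q0.1 ∨ (x.1 - q0.1 = 0 ∧ 0 < x.2 - q0.2))
    (hy : 0 < y.1 - q0.1 ∨ (y.1 - q0.1 = 0 ∧ 0 < y.2 - q0.2))
    (hz : 0 < z.1 - q0.1 ∨ (z.1 - q0.1 = 0 ∧ 0 < z.2 - q0.2))
    (h1 : 0 < cross2 q0 x y) (h2 : 0 < cross2 q0 y z) : 0 < cross2 q0 x z := by
  simp only [cross2] at h1 h2 ⊢
  set a := x.1 - q0.1 with ha'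
  set b := x.2 - q0.2
  set c := y.1 - q0.1
  set d := y.2 - q0.2
  set e := z.1 - q0.1
  set f := z.2 - q0.2
  have he0 : 0 ≤ e := by rcases hz with h | ⟨h, _⟩ <;> linarith
  rcases hy with hcpos | ⟨hc0, hd⟩
  · have hapos : 0 < a := by
      rcases hx with h | ⟨h0, hb⟩
      · exact h
      · exfalso
        have had : a * d = 0 := by rw [h0]; ring
        nlinarith [mul_pos hb hcpos]
    nlinarith [mul_pos hapos h2, mul_nonneg he0 h1.le]
  · exfalso
    have hd0 : 0 < d := hd
    have hcf : c * f = 0 := by rw [hc0]; ring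
    nlinarith [mul_nonneg hd0.le he0]


/-- master orientation theorem -/
theorem master (hn : 3 ≤ n) {p : Fin n → Pt} (hinj : Function.Injective p)
    (hI : ConvexIndependent ℝ p)
    (hsimple : ∀ i j : Fin n, i ≠ j →
      seg (p i) (p (i+1)) ∩ seg (p j) (p (j+1)) ⊆ ({p i, p (i+1)} ∩ {p j, p (j+1)} : Set Pt)) :
    ∃ ε : ℝ, (ε = 1 ∨ ε = -1) ∧ ∀ a b c : Fin n, cyc a b c → 0 < ε * cross2 (p a) (p b) (p c) := by
  obtain ⟨i0, -, hmin⟩ := Finset.exists_min_image Finset.univ (fun i => toLex (p i))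
    ⟨0, Finset.mem_univ 0⟩
  have hlex : ∀ j : Fin n, j ≠ i0 →
      0 < (p j).1 - (p i0).1 ∨ ((p j).1 - (p i0).1 = 0 ∧ 0 < (p j).2 - (p i0).2) := by
    intro j hj
    have h1 : toLex (p i0) ≤ toLex (p j) := hmin j (Finset.mem_univ j)
    have h2 : toLex (p i0) ≠ toLex (p j) := by
      intro hc
      have hc2 : p i0 = p j := by simpa using congrArg ofLex hc
      exact hj (hinj hc2).symm
    have h3 := lt_of_le_of_ne h1 h2
    rw [Prod.Lex.lt_iff, ofLex_toLex, ofLex_toLex] at h3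
    rcases h3 with h | ⟨h, h'⟩
    · left; linarith
    · right; exact ⟨by linarith, by linarith⟩
  -- strict order on non-apex vertices, then sort
  set S := {j : Fin n // j ≠ i0} with hS
  let r : S → S → Prop := fun j k => 0 < cross2 (p i0) (p j.1) (p k.1)
  have hr_irr : ∀ a : S, ¬ r a a := fun a => by
    simp only [r, cross2_self', lt_self_iff_false, not_false_iff]
  have hr_trans : ∀ a b c : S, r a b → r b c → r a c := fun a b c h1 h2 =>
    halfplane_trans (hlex a.1 a.2) (hlex b.1 b.2) (hlex c.1 c.2) h1 h2
  have hr_tri : ∀ a b : S, a ≠ b → r a b ∨ r b a := by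
    intro a b hab
    have hne := not_collinear hI (Ne.symm a.2) (Ne.symm b.2)
      (fun hc => hab (Subtype.ext hc))
    rcases lt_or_gt_of_ne hne with h | h
    · right
      have hs := cross2_swap (p i0) (p a.1) (p b.1)
      show 0 < cross2 (p i0) (p b.1) (p a.1)
      rw [hs]; linarith
    · left; exact h
  let r' : S → S → Prop := fun a b => a = b ∨ r a b
  letI : DecidableRel r' := Classical.decRel _
  haveI : IsTrans S r' := ⟨by
    rintro a b c (rfl | h1) (rfl | h2)
    · exact Or.inl rfl
    · exact Or.inr h2
    · exact Or.inr h1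
    · exact Or.inr (hr_trans a b c h1 h2)⟩
  haveI : IsAntisymm S r' := ⟨by
    rintro a b (rfl | h1) (h2 | h2)
    · rfl
    · rfl
    · exact h2.symm
    · exact absurd (hr_trans a b a h1 h2) (hr_irr a)⟩
  haveI : IsTotal S r' := ⟨by
    intro a b
    rcases eq_or_ne a b with rfl | hab
    · exact Or.inl (Or.inl rfl)
    · rcases hr_tri a b hab with h | h
      · exact Or.inl (Or.inr h)
      · exact Or.inr (Or.inr h)⟩
  set l : List S := Finset.sort Finset.univ r' with hl
  have hlen : l.length = n - 1 := by
    rw [hl, Finset.length_sort, Finset.card_univ]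
    have h1 : Fintype.card S = Fintype.card (Fin n) - Fintype.card {j : Fin n // j = i0} :=
      Fintype.card_subtype_compl _
    rw [Fintype.card_fin, Fintype.card_subtype_eq] at h1
    exact h1
  have hnodup : l.Nodup := Finset.sort_nodup Finset.univ r'
  have hgetinj : Function.Injective l.get := List.nodup_iff_injective_get.mp hnodup
  have hsorted : ∀ i j : Fin l.length, i < j → r (l.get i) (l.get j) := by
    intro i j hij
    have h1 := List.pairwise_iff_get.mp (Finset.pairwise_sort Finset.univ r') i j hij
    rcases h1 with h | h
    · exact absurd (hgetinj h) (ne_of_lt hij)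
    · exact h
  -- hull enumeration
  have hidxlt : ∀ t : Fin n, t.val ≠ 0 → t.val - 1 < l.length := by
    intro t ht; have := t.isLt; omega
  let hfun : Fin n → Fin n := fun t =>
    if ht : t.val = 0 then i0 else (l.get ⟨t.val - 1, hidxlt t ht⟩).1
  have hfun_pos : ∀ (t : Fin n) (ht : t.val ≠ 0),
      hfun t = (l.get ⟨t.val - 1, hidxlt t ht⟩).1 := by
    intro t ht; simp only [hfun, dif_neg ht]
  have hfinj : Function.Injective hfun := by
    intro s t hst
    by_cases hs : s.val = 0 <;> by_cases ht : t.val = 0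
    · exact Fin.ext (by omega)
    · exfalso
      rw [hfun_pos t ht] at hst
      simp only [hfun, hs, dif_pos] at hst
      exact (l.get ⟨t.val - 1, hidxlt t ht⟩).2 hst.symm
    · exfalso
      rw [hfun_pos s hs] at hst
      simp only [hfun, ht, dif_pos] at hst
      exact (l.get ⟨s.val - 1, hidxlt s hs⟩).2 hst
    · rw [hfun_pos s hs, hfun_pos t ht] at hst
      have h2 := hgetinj (Subtype.ext hst)
      have h3 := congrArg Fin.val h2
      simp only at h3
      exact Fin.ext (by omega)
  have hfbij := Finite.injective_iff_bijective.mp hfinj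
  -- linear positivity
  have Hpos : ∀ s t u : Fin n, s < t → t < u →
      0 < cross2 (p (hfun s)) (p (hfun t)) (p (hfun u)) := by
    intro s t u hst htu
    have hsv := s.isLt; have htv := t.isLt; have huv := u.isLt
    rw [Fin.lt_def] at hst htu
    have htne : t.val ≠ 0 := by omega
    have hune : u.val ≠ 0 := by omega
    set B := l.get ⟨t.val - 1, hidxlt t htne⟩ with hB
    set C := l.get ⟨u.val - 1, hidxlt u hune⟩ with hC
    have hrBC : r B C := hsorted _ _ (by rw [Fin.lt_def]; simp; omega)
    rw [hfun_pos t htne, hfun_pos u hune]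
    by_cases hs : s.val = 0
    · have h4 : hfun s = i0 := by simp only [hfun, dif_pos hs]
      rw [h4]
      exact hrBC
    · set A := l.get ⟨s.val - 1, hidxlt s hs⟩ with hA
      rw [hfun_pos s hs]
      have hrAB : r A B := hsorted _ _ (by rw [Fin.lt_def]; simp; omega)
      have hrAC : r A C := hr_trans _ _ _ hrAB hrBC
      by_contra hle
      push_neg at hle
      have hABne : A.1 ≠ B.1 := by
        intro hc
        have h5 := congrArg Fin.val (hgetinj (Subtype.ext hc))
        simp only at h5
        omega
      have hACne : A.1 ≠ C.1 := by
        intro hc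
        have h5 := congrArg Fin.val (hgetinj (Subtype.ext hc))
        simp only at h5
        omega
      have hBCne : B.1 ≠ C.1 := by
        intro hc
        have h5 := congrArg Fin.val (hgetinj (Subtype.ext hc))
        simp only at h5
        omega
      have hne0 := not_collinear hI hABne hACne hBCne
      have hlt0 : cross2 (p A.1) (p B.1) (p C.1) < 0 := lt_of_le_of_ne hle hne0
      have h1' : 0 < cross2 (p B.1) (p A.1) (p C.1) := by
        have hh := (cross2_rot (p B.1) (p A.1) (p C.1)).trans
          (cross2_swap (p A.1) (p B.1) (p C.1))
        rw [hh]; linarith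
      have hmem := mem_hull_triangle hrAC h1' hrBC hrAB
      have himg : ({p i0, p A.1, p C.1} : Set Pt) = p '' {i0, A.1, C.1} := by
        rw [Set.image_insert_eq, Set.image_pair]
      rw [himg] at hmem
      have hBin := hI {i0, A.1, C.1} B.1 hmem
      simp only [Set.mem_insert_iff, Set.mem_singleton_iff] at hBin
      rcases hBin with h | h | h
      · exact B.2 h
      · exact hABne h.symm
      · exact hBCne h
  have Hcyc : ∀ s t u : Fin n, cyc s t u →
      0 < cross2 (p (hfun s)) (p (hfun t)) (p (hfun u)) := by
    intro s t u hstu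
    rcases cyc_linear_cases hstu with ⟨h1, h2⟩ | ⟨h1, h2⟩ | ⟨h1, h2⟩
    · exact Hpos s t u h1 h2
    · rw [cross2_rot]; exact Hpos t u s h1 h2
    · rw [cross2_rot, cross2_rot]; exact Hpos u s t h1 h2
  let hEq : Fin n ≃ Fin n := Equiv.ofBijective hfun hfbij
  let σ : Fin n → Fin n := fun i => hEq.symm i
  have hσ : ∀ i, hfun (σ i) = i := fun i => hEq.apply_symm_apply i
  have hσinj : Function.Injective σ := hEq.symm.injective
  have hσsurj : Function.Surjective σ := hEq.symm.surjective
  have hor1 : ∀ a b c : Fin n, cyc a b c →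
      0 < (1:ℝ) * cross2 ((fun i => p (hfun i)) a) ((fun i => p (hfun i)) b)
        ((fun i => p (hfun i)) c) := by
    intro a b c h
    simpa using Hcyc a b c h
  have Hw : ∀ k l' : Fin n,
      ¬(cyc (σ k) (σ l') (σ (k+1)) ∧ cyc (σ (k+1)) (σ (l'+1)) (σ k)) ∧
      ¬(cyc (σ k) (σ (l'+1)) (σ (k+1)) ∧ cyc (σ (k+1)) (σ l') (σ k)) := by
    intro k j
    have hedge : ∀ x : Pt, x ∈ seg (p k) (p (k+1)) → x ∈ seg (p j) (p (j+1)) →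
        k ≠ j → k ≠ j + 1 → k + 1 ≠ j → k + 1 ≠ j + 1 → False := by
      intro x hx1 hx2 e1 e2 e3 e4
      have hsub := hsimple k j e1 ⟨hx1, hx2⟩
      simp only [Set.mem_inter_iff, Set.mem_insert_iff, Set.mem_singleton_iff] at hsub
      obtain ⟨ha, hb⟩ := hsub
      rcases ha with rfl | rfl <;> rcases hb with h5 | h5
      · exact e1 (hinj h5)
      · exact e2 (hinj h5)
      · exact e3 (hinj h5)
      · exact e4 (hinj h5)
    constructor
    · rintro ⟨hc1, hc2⟩
      obtain ⟨x, hx1, hx2⟩ := GA (Or.inl rfl) hor1 hc1 hc2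
      simp only [hσ] at hx1 hx2
      obtain ⟨d1, d2, d3⟩ := cyc_ne hc1
      obtain ⟨d4, d5, d6⟩ := cyc_ne hc2
      exact hedge x hx1 hx2 (fun hc => d1 (by rw [hc])) (fun hc => d5 (by rw [hc]))
        (fun hc => d2 (by rw [hc])) (fun hc => d4 (by rw [hc]))
    · rintro ⟨hc1, hc2⟩
      obtain ⟨x, hx1, hx2⟩ := GA (Or.inl rfl) hor1 hc1 hc2
      simp only [hσ] at hx1 hx2
      rw [seg_symm] at hx2
      obtain ⟨d1, d2, d3⟩ := cyc_ne hc1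
      obtain ⟨d4, d5, d6⟩ := cyc_ne hc2
      exact hedge x hx1 hx2 (fun hc => d5 (by rw [hc])) (fun hc => d1 (by rw [hc]))
        (fun hc => d4 (by rw [hc])) (fun hc => d2 (by rw [hc]))
  have hn2 : 2 ≤ n := by omega
  have hstep : ∀ k : Fin n, σ (k+1) = σ k + 1 ∨ σ k = σ (k+1) + 1 := by
    intro k
    have hne : σ k ≠ σ (k+1) := fun hc => fin_succ_ne hn2 k (hσinj hc).symm
    rcases walk hn σ hσinj Hw k with h | h
    · left
      apply arc_empty hn2 hne
      intro x hx
      obtain ⟨j, rfl⟩ := hσsurj x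
      exact h j hx
    · right
      apply arc_empty hn2 (Ne.symm hne)
      intro x hx
      obtain ⟨j, rfl⟩ := hσsurj x
      exact h j hx
  have h2ne : ∀ k : Fin n, k + 1 + 1 ≠ k := by
    intro k hc
    have h1 : k + (1 + 1) = k := by rw [← add_assoc]; exact hc
    have h2 : (1 + 1 : Fin n) = 0 := add_eq_left.mp h1
    have h3 := congrArg Fin.val h2
    have h4 : ((1 + 1 : Fin n)).val = 2 % n := by
      rw [Fin.val_add, Fin.val_one' n, Nat.mod_eq_of_lt hn2]
    rw [h4, Nat.mod_eq_of_lt (by omega : 2 < n)] at h3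
    simp at h3
  rcases hstep 0 with h0 | h0
  · -- plus direction
    have hall : ∀ k : Fin n, σ (k+1) = σ k + 1 := by
      have haux : ∀ t : ℕ, σ ((t : Fin n) + 1) = σ (t : Fin n) + 1 := by
        intro t
        induction t with
        | zero => simpa using h0
        | succ t iht =>
          have hc : ((t+1 : ℕ) : Fin n) = (t : Fin n) + 1 := by push_cast; ring
          rw [hc]
          rcases hstep ((t : Fin n) + 1) with h | h
          · exact h
          · exfalso
            rw [iht] at h
            have h7 : σ ((t : Fin n) + 1 + 1) = σ (t : Fin n) := add_right_cancel h.symm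
            exact h2ne (t : Fin n) (hσinj h7)
      intro k
      have := haux k.val
      rwa [Fin.cast_val_eq_self] at this
    have hshift : ∀ k : Fin n, σ k = σ 0 + k := by
      have haux : ∀ t : ℕ, σ ((t : Fin n)) = σ 0 + (t : Fin n) := by
        intro t
        induction t with
        | zero => simp
        | succ t iht =>
          have hc : ((t+1 : ℕ) : Fin n) = (t : Fin n) + 1 := by push_cast; ring
          rw [hc, hall, iht, add_assoc]
      intro k
      have := haux k.val
      rwa [Fin.cast_val_eq_self] at this
    refine ⟨1, Or.inl rfl, ?_⟩
    intro a b c habc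
    have hc : cyc (σ a) (σ b) (σ c) := by
      rw [hshift a, hshift b, hshift c]
      unfold cyc
      rw [fd_add_left, fd_add_left]
      exact habc
    have := Hcyc _ _ _ hc
    rw [hσ, hσ, hσ] at this
    simpa using this
  · -- minus direction
    have hall : ∀ k : Fin n, σ k = σ (k+1) + 1 := by
      have haux : ∀ t : ℕ, σ (t : Fin n) = σ ((t : Fin n) + 1) + 1 := by
        intro t
        induction t with
        | zero => simpa using h0
        | succ t iht =>
          have hc : ((t+1 : ℕ) : Fin n) = (t : Fin n) + 1 := by push_cast; ring
          rw [hc]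
          rcases hstep ((t : Fin n) + 1) with h | h
          · exfalso
            have h7 : σ ((t : Fin n) + 1 + 1) = σ (t : Fin n) := h.trans iht.symm
            exact h2ne (t : Fin n) (hσinj h7)
          · exact h
      intro k
      have := haux k.val
      rwa [Fin.cast_val_eq_self] at this
    have hshift : ∀ k : Fin n, σ k = σ 0 - k := by
      have haux : ∀ t : ℕ, σ ((t : Fin n)) = σ 0 - (t : Fin n) := by
        intro t
        induction t with
        | zero => simp
        | succ t iht =>
          have hc : ((t+1 : ℕ) : Fin n) = (t : Fin n) + 1 := by push_cast; ring
          rw [hc]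
          have h1 := hall (t : Fin n)
          have h2 : σ ((t : Fin n) + 1) = σ (t : Fin n) - 1 := by
            rw [h1]; ring
          rw [h2, iht]
          ring
      intro k
      have := haux k.val
      rwa [Fin.cast_val_eq_self] at this
    refine ⟨-1, Or.inr rfl, ?_⟩
    intro a b c habc
    have hc : cyc (σ a) (σ c) (σ b) := by
      rw [hshift a, hshift b, hshift c]
      exact cyc_rev (σ 0) habc
    have := Hcyc _ _ _ hc
    rw [hσ, hσ, hσ] at this
    have hs := cross2_swap (p a) (p b) (p c)
    nlinarith [this, hs]

/-- counting lemma: a monotone (all arcs clean) cycle with gaps ≥ 2 satisfies 2m ≤ n -/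
lemma count {m : ℕ} [NeZero m] (f : Fin m → Fin n) (hf : Function.Injective f)
    (hclean : ∀ k j : Fin m, ¬ cyc (f k) (f j) (f (k+1)))
    (hgap : ∀ k : Fin m, 2 ≤ fd (f k) (f (k+1))) : 2 * m ≤ n := by
  classical
  set δ : Fin m → ℕ := fun k => fd (f k) (f (k+1)) with hδ
  set T : Fin m → Finset (Fin n) := fun k => Finset.univ.filter (fun x => fd (f k) x < δ k)
    with hT
  have hmemT : ∀ (k : Fin m) (x : Fin n), x ∈ T k ↔ fd (f k) x < δ k := by
    intro k x; simp [hT]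
  -- card of T k
  have hcard : ∀ k, (T k).card = δ k := by
    intro k
    have himg : T k = (Finset.range (δ k)).image (fun t : ℕ => f k + (t : Fin n)) := by
      ext x
      rw [hmemT]
      simp only [Finset.mem_image, Finset.mem_range]
      constructor
      · intro hx
        exact ⟨fd (f k) x, hx, add_fd _ _⟩
      · rintro ⟨t, ht, rfl⟩
        have hδlt : δ k < n := fd_lt _ _
        rw [fd_add]
        rw [Fin.val_cast_of_lt (by omega)]
        exact ht
    rw [himg, Finset.card_image_of_injOn, Finset.card_range]
    intro t1 h1 t2 h2 he
    simp only [Finset.coe_range, Set.mem_Iio] at h1 h2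
    have hδlt : δ k < n := fd_lt _ _
    have h3 : ((t1 : ℕ) : Fin n) = ((t2 : ℕ) : Fin n) := add_left_cancel he
    have h4 := congrArg Fin.val h3
    rw [Fin.val_cast_of_lt (by omega), Fin.val_cast_of_lt (by omega)] at h4
    exact h4
  -- key separation
  have key : ∀ (x : Fin n) (k1 k2 : Fin m), k1 ≠ k2 → x ∈ T k1 → x ∈ T k2 →
      fd (f k1) x ≤ fd (f k2) x → False := by
    intro x k1 k2 hne h1 h2 hle
    rw [hmemT] at h1 h2
    have hD : 0 < fd (f k2) (f k1) := fd_pos_of_ne (fun hc => hne (hf hc).symm)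
    have htr := fd_trans' (f k2) (f k1) x
    have hlt1 := fd_lt (f k2) (f k1)
    have hlt2 := fd_lt (f k1) x
    have hlt3 := fd_lt (f k2) x
    have hd2 : δ k2 = fd (f k2) (f (k2+1)) := rfl
    apply hclean k2 k1
    exact ⟨hD, by omega⟩
  -- existence
  have hex : ∀ x : Fin n, ∃ k, x ∈ T k := by
    intro x
    obtain ⟨k0, -, hk0⟩ := Finset.exists_min_image Finset.univ (fun k => fd (f k) x)
      ⟨0, Finset.mem_univ 0⟩
    refine ⟨k0, ?_⟩
    rw [hmemT]
    by_contra hge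
    push_neg at hge
    have htr := fd_trans' (f k0) (f (k0+1)) x
    have hg := hgap k0
    have hlt1 := fd_lt (f (k0+1)) x
    have hlt2 := fd_lt (f k0) x
    have hmin := hk0 (k0+1) (Finset.mem_univ _)
    have hd0 : δ k0 = fd (f k0) (f (k0+1)) := rfl
    omega
  -- disjointness and cover imply sum
  have hsum : ∑ k : Fin m, (T k).card = n := by
    have hdisj : ∀ k1 ∈ Finset.univ, ∀ k2 ∈ Finset.univ, k1 ≠ k2 →
        Disjoint (T k1) (T k2) := by
      intro k1 _ k2 _ hne
      rw [Finset.disjoint_left]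
      intro x hx1 hx2
      rcases le_total (fd (f k1) x) (fd (f k2) x) with h | h
      · exact key x k1 k2 hne hx1 hx2 h
      · exact key x k2 k1 hne.symm hx2 hx1 h
    have hcover : Finset.univ.biUnion T = Finset.univ := by
      ext x
      simp only [Finset.mem_biUnion, Finset.mem_univ, iff_true, true_and]
      exact hex x
    have := Finset.card_biUnion hdisj
    rw [hcover] at this
    simp only [Finset.card_univ, Fintype.card_fin] at this
    omega
  have h2m : 2 * m ≤ ∑ k : Fin m, (T k).card := by
    have h1 : ∑ k : Fin m, 2 ≤ ∑ k : Fin m, (T k).card := by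
      apply Finset.sum_le_sum
      intro k _
      rw [hcard k]
      exact hgap k
    simp only [Finset.sum_const, Finset.card_univ, Fintype.card_fin, smul_eq_mul] at h1
    omega
  omega

lemma fin_two_ne (hn : 3 ≤ n) (k : Fin n) : k + 1 + 1 ≠ k := by
  intro hc
  have h1 : k + (1 + 1) = k := by rw [← add_assoc]; exact hc
  have h2 : (1 + 1 : Fin n) = 0 := add_eq_left.mp h1
  have h3 := congrArg Fin.val h2
  have hv1 : (1 : Fin n).val = 1 := by
    rw [Fin.val_one' n, Nat.mod_eq_of_lt (show 1 < n by omega)]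
  rw [Fin.val_add, hv1, Fin.val_zero, Nat.mod_eq_of_lt (show 1+1 < n by omega)] at h3
  omega

lemma upper {m : ℕ} [NeZero m] (hn : 3 ≤ n) (hm : 3 ≤ m) {p : Fin n → Pt}
    (hinj : Function.Injective p) {ε : ℝ} (hε : ε = 1 ∨ ε = -1)
    (hor : ∀ a b c : Fin n, cyc a b c → 0 < ε * cross2 (p a) (p b) (p c))
    (f : Fin m → Fin n) (hf : Function.Injective f)
    (hnadj : ∀ k : Fin m, ¬ (f (k+1) = f k + 1 ∨ f k = f (k+1) + 1))
    (hNC : ∀ k l : Fin m, ({p (f k), p (f (k+1))} : Set Pt) ≠ {p (f l), p (f (l+1))} →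
        seg (p (f k)) (p (f (k+1))) ∩ seg (p (f l)) (p (f (l+1))) ⊆
          ({p (f k), p (f (k+1))} ∩ {p (f l), p (f (l+1))} : Set Pt)) :
    2 * m ≤ n := by
  have hn2 : 2 ≤ n := by omega
  have hm2 : 2 ≤ m := by omega
  -- gaps are between 2 and n-2
  have hgapboth : ∀ k : Fin m, 2 ≤ fd (f k) (f (k+1)) ∧ fd (f k) (f (k+1)) ≤ n - 2 := by
    intro k
    have hne : f k ≠ f (k+1) := fun hc => fin_succ_ne hm2 k (hf hc.symm)
    have h0 : fd (f k) (f (k+1)) ≠ 0 := fun hc => hne (fd_eq_zero_iff.mp hc)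
    have h1 : fd (f k) (f (k+1)) ≠ 1 := fun hc =>
      hnadj k (Or.inl (eq_add_one_of_fd_one hn2 hc))
    have h0' : fd (f (k+1)) (f k) ≠ 0 := fun hc => hne (fd_eq_zero_iff.mp hc).symm
    have h1' : fd (f (k+1)) (f k) ≠ 1 := fun hc =>
      hnadj k (Or.inr (eq_add_one_of_fd_one hn2 hc))
    have hadd := fd_add_fd (f k) (f (k+1)) hne
    omega
  -- the walk hypothesis
  have Hw : ∀ k l : Fin m,
      ¬(cyc (f k) (f l) (f (k+1)) ∧ cyc (f (k+1)) (f (l+1)) (f k)) ∧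
      ¬(cyc (f k) (f (l+1)) (f (k+1)) ∧ cyc (f (k+1)) (f l) (f k)) := by
    intro k l
    have hcontra : ∀ x : Pt, x ∈ seg (p (f k)) (p (f (k+1))) →
        x ∈ seg (p (f l)) (p (f (l+1))) →
        f l ≠ f k → f l ≠ f (k+1) → f (l+1) ≠ f k → f (l+1) ≠ f (k+1) → False := by
      intro x hx1 hx2 e1 e2 e3 e4
      have hsetne : ({p (f k), p (f (k+1))} : Set Pt) ≠ {p (f l), p (f (l+1))} := by
        intro hset
        have hmem : p (f l) ∈ ({p (f k), p (f (k+1))} : Set Pt) := by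
          rw [hset]; left; rfl
        rcases hmem with h | h
        · exact e1 (hinj h)
        · exact e2 (hinj h)
      have hsub := hNC k l hsetne ⟨hx1, hx2⟩
      simp only [Set.mem_inter_iff, Set.mem_insert_iff, Set.mem_singleton_iff] at hsub
      obtain ⟨ha, hb⟩ := hsub
      rcases ha with rfl | rfl <;> rcases hb with h5 | h5
      · exact e1 (hinj h5).symm
      · exact e3 (hinj h5).symm
      · exact e2 (hinj h5).symm
      · exact e4 (hinj h5).symm
    constructor
    · rintro ⟨hc1, hc2⟩
      obtain ⟨x, hx1, hx2⟩ := GA hε hor hc1 hc2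
      obtain ⟨d1, d2, d3⟩ := cyc_ne hc1
      obtain ⟨d4, d5, d6⟩ := cyc_ne hc2
      exact hcontra x hx1 hx2 (Ne.symm d1) d2 d5 (Ne.symm d4)
    · rintro ⟨hc1, hc2⟩
      obtain ⟨x, hx1, hx2⟩ := GA hε hor hc1 hc2
      rw [seg_symm] at hx2
      obtain ⟨d1, d2, d3⟩ := cyc_ne hc1
      obtain ⟨d4, d5, d6⟩ := cyc_ne hc2
      exact hcontra x hx1 hx2 d5 (Ne.symm d4) (Ne.symm d1) d2
  have hdich := fun k => walk hm f hf Hw k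
  -- uniqueness of clean arcs with common start
  have U : ∀ (a : Fin n) (l1 l2 : Fin m), f l1 ≠ a → f l2 ≠ a → f l1 ≠ f l2 →
      (∀ j, ¬ cyc a (f j) (f l1)) → (∀ j, ¬ cyc a (f j) (f l2)) → False := by
    intro a l1 l2 h1 h2 h12 hc1 hc2
    have t1 : cyc (f l1) (f l2) a := by
      rcases cyc_tricho (Ne.symm h1) h2 (Ne.symm h12) with h | h
      · exact absurd h (hc1 l2)
      · exact h
    have t2 : cyc (f l2) (f l1) a := by
      rcases cyc_tricho (Ne.symm h2) h1 h12 with h | h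
      · exact absurd h (hc2 l1)
      · exact h
    exact cyc_asymm (cyc_rot (cyc_rot t1)) t2
  by_cases hall1 : ∀ k : Fin m, ∀ j, ¬ cyc (f k) (f j) (f (k+1))
  · exact count f hf hall1 (fun k => (hgapboth k).1)
  · push_neg at hall1
    obtain ⟨k1, j1, hj1⟩ := hall1
    have hk1 : ∀ j, ¬ cyc (f (k1+1)) (f j) (f k1) := by
      rcases hdich k1 with h | h
      · exact absurd hj1 (h j1)
      · exact h
    -- propagate Clean2
    have hstep : ∀ k : Fin m, (∀ j, ¬ cyc (f (k+1)) (f j) (f k)) →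
        (∀ j, ¬ cyc (f (k+1+1)) (f j) (f (k+1))) := by
      intro k hk
      rcases hdich (k+1) with h | h
      · exfalso
        have hne1 : f k ≠ f (k+1) := fun hc => fin_succ_ne hm2 k (hf hc.symm)
        have hne2 : f (k+1+1) ≠ f (k+1) := fun hc => fin_succ_ne hm2 (k+1) (hf hc)
        have hne3 : f k ≠ f (k+1+1) := fun hc => fin_two_ne hm k (hf hc).symm
        exact U (f (k+1)) k (k+1+1) hne1 hne2 hne3 hk h
      · exact h
    have hall2 : ∀ k : Fin m, ∀ j, ¬ cyc (f (k+1)) (f j) (f k) := by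
      have haux : ∀ t : ℕ, ∀ j, ¬ cyc (f (k1 + (t : Fin m) + 1)) (f j) (f (k1 + (t : Fin m))) := by
        intro t
        induction t with
        | zero => simpa using hk1
        | succ t iht =>
          have hc : ((t+1 : ℕ) : Fin m) = (t : Fin m) + 1 := by push_cast; ring
          rw [hc, ← add_assoc]
          exact hstep (k1 + (t : Fin m)) iht
      intro k
      have h5 := haux (fd k1 k)
      rwa [add_fd] at h5
    -- reverse the cycle
    let F : Fin m → Fin n := fun k => f (-k)
    have hFinj : Function.Injective F := fun x y hxy => neg_injective (hf hxy)
    have hFrel : ∀ k : Fin m, F (k+1) = f (-k-1) := by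
      intro k; show f (-(k+1)) = f (-k-1); congr 1; ring
    have hclean : ∀ k j : Fin m, ¬ cyc (F k) (F j) (F (k+1)) := by
      intro k j
      rw [hFrel]
      have h5 := hall2 (-k-1) (-j)
      have h6 : -k-1+1 = -k := by ring
      rw [h6] at h5
      exact h5
    have hgap : ∀ k : Fin m, 2 ≤ fd (F k) (F (k+1)) := by
      intro k
      rw [hFrel]
      show 2 ≤ fd (f (-k)) (f (-k-1))
      set l := -k-1 with hl
      have h6 : -k = l + 1 := by rw [hl]; ring
      rw [h6]
      have hne : f l ≠ f (l+1) := fun hc => fin_succ_ne hm2 l (hf hc.symm)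
      have hadd := fd_add_fd (f l) (f (l+1)) hne
      have := (hgapboth l).2
      omega
    exact count F hFinj hclean hgap



lemma edge_same_side {n : ℕ} [NeZero n] (hn2 : 2 ≤ n) {a b i : Fin n} (hab : a ≠ b)
    (hia : i ≠ a) (hib : i ≠ b) (hi1a : i+1 ≠ a) (hi1b : i+1 ≠ b) :
    (cyc a i b ∧ cyc a (i+1) b) ∨ (cyc b i a ∧ cyc b (i+1) a) := by
  have hii1 : i ≠ i + 1 := (fin_succ_ne hn2 i).symm
  have hfd1 : fd i (i+1) = 1 := fd_add_one i hn2
  rcases cyc_tricho hab hia hib with h1 | h1 <;>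
    rcases cyc_tricho hab hi1a hi1b with h2 | h2
  · exact Or.inl ⟨h1, h2⟩
  · exfalso
    obtain ⟨g1, g2⟩ := (cyc_mid h1 h2).2
    rw [hfd1] at g2
    omega
  · exfalso
    obtain ⟨g1, g2⟩ := (cyc_mid h2 h1).1
    have h3 := fd_add_fd i (i+1) hii1
    have h4 := fd_lt (i+1) a
    rw [hfd1] at h3
    omega
  · exact Or.inr ⟨h1, h2⟩

lemma lower {n m₀ : ℕ} [NeZero n] [NeZero m₀] (hn : 4 ≤ n) (hm₀2 : 2 ≤ m₀)
    (hmm1 : 2 * m₀ ≤ n) (hmm2 : n ≤ 2 * m₀ + 1)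
    {p : Fin n → Pt} (hpinj : Function.Injective p) (hI : ConvexIndependent ℝ p)
    {ε : ℝ} (hε : ε = 1 ∨ ε = -1)
    (hor : ∀ a b c : Fin n, cyc a b c → 0 < ε * cross2 (p a) (p b) (p c)) :
    ∃ f : Fin m₀ → Fin n, IsCycleEmbedding p (convexHull ℝ (Set.range p)) f := by
  have hn2 : 2 ≤ n := by omega
  have hflt : ∀ k : Fin m₀, 2 * k.val < n := by intro k; have := k.isLt; omega
  set f : Fin m₀ → Fin n := fun k => ⟨2 * k.val, hflt k⟩ with hfdef
  have hfv : ∀ k, (f k).val = 2 * k.val := fun k => rfl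
  have hsv : ∀ k : Fin m₀, ((k+1 : Fin m₀)).val = (k.val + 1) % m₀ := by
    intro k
    rw [Fin.val_add, Fin.val_one' m₀, Nat.mod_eq_of_lt (show 1 < m₀ by omega)]
  have hfinj : Function.Injective f := by
    intro a b hab
    have h1 := congrArg Fin.val hab
    rw [hfv, hfv] at h1
    exact Fin.ext (by omega)
  have hfd1 : ∀ k : Fin m₀, fd (f k) (f (k+1)) =
      if k.val = m₀ - 1 then n - (2*m₀ - 2) else 2 := by
    intro k
    have hkv := k.isLt
    have hmod : (k.val + 1) % m₀ = if k.val = m₀ - 1 then 0 else k.val + 1 := by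
      by_cases hk : k.val = m₀ - 1
      · rw [if_pos hk]
        have h1 : k.val + 1 = m₀ := by omega
        rw [h1, Nat.mod_self]
      · rw [if_neg hk]; exact Nat.mod_eq_of_lt (by omega)
    rw [fd_eq, hfv, hfv, hsv, hmod]
    split_ifs <;> omega
  have hgap2 : ∀ k : Fin m₀, 2 ≤ fd (f k) (f (k+1)) ∧ fd (f k) (f (k+1)) ≤ n - 2 := by
    intro k; rw [hfd1]; have := k.isLt; split_ifs <;> omega
  have hfne : ∀ k : Fin m₀, f k ≠ f (k+1) := by
    intro k hc
    have h1 := fd_eq_zero_iff.mpr hc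
    have := (hgap2 k).1; omega
  have hfne1 : ∀ k : Fin m₀, f (k+1) ≠ f k + 1 := by
    intro k hc
    have h2 : fd (f k) (f (k+1)) = 1 := by rw [hc]; exact fd_add_one _ hn2
    have := (hgap2 k).1; omega
  have hfne2 : ∀ k : Fin m₀, f k ≠ f (k+1) + 1 := by
    intro k hc
    have h2 : fd (f (k+1)) (f k) = 1 := by rw [hc]; exact fd_add_one _ hn2
    have h3 := fd_add_fd (f k) (f (k+1)) (hfne k)
    have := (hgap2 k).2; omega
  have harc : ∀ (k : Fin m₀) (x : Fin n), cyc (f k) x (f (k+1)) → ∀ j : Fin m₀, x ≠ f j := by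
    intro k x hx j hxj
    obtain ⟨h1, h2⟩ := hx
    rw [hfd1] at h2
    rw [hxj] at h1 h2
    rw [fd_eq] at h1 h2
    rw [hfv, hfv] at h1 h2
    have := k.isLt; have := j.isLt
    split_ifs at h1 h2 <;> omega
  have hGC : ∀ (v w1 w2 : Fin n), v ≠ w1 → v ≠ w2 → w1 ≠ w2 →
      seg (p v) (p w1) ∩ seg (p v) (p w2) ⊆ {p v} :=
    fun v w1 w2 h1 h2 h3 => shared_endpoint (not_collinear hI h1 h2 h3)
  have hnadj : ∀ k : Fin m₀, ¬ adjV (f k) (f (k+1)) := by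
    intro k h
    rcases h with h | h
    · exact hfne1 k h
    · exact hfne2 k h
  refine ⟨f, hfinj, hnadj, ?_, ?_, ?_⟩
  · intro k
    exact (convex_convexHull ℝ _).segment_subset
      (subset_convexHull ℝ _ ⟨f k, rfl⟩) (subset_convexHull ℝ _ ⟨f (k+1), rfl⟩)
  · -- chord-chord non-crossing
    intro k l hne
    intro x hx
    obtain ⟨hx1, hx2⟩ := hx
    by_cases hlk : l = k
    · exact absurd (by rw [hlk]) hne
    · by_cases hlk1 : l = k + 1
      · by_cases hkl1 : k = l + 1
        · exfalso
          apply hne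
          rw [hlk1] at hkl1
          rw [hlk1, ← hkl1, Set.pair_comm]
        · -- share v = f (k+1)
          have hw2ne : f k ≠ f (l+1) := fun hc => hkl1 (hfinj hc)
          have hvw2 : f (k+1) ≠ f (l+1) := by
            intro hc
            have h5 := hfinj hc
            rw [hlk1] at h5
            exact fin_succ_ne (by omega : 2 ≤ m₀) (k+1) h5.symm
          have hx2b : x ∈ seg (p (f (k+1))) (p (f (l+1))) := by
            rw [← hlk1]; exact hx2
          have hxv : x ∈ ({p (f (k+1))} : Set Pt) := by
            apply hGC (f (k+1)) (f k) (f (l+1)) (hfne k).symm hvw2 hw2ne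
            exact ⟨by rw [seg_symm]; exact hx1, hx2b⟩
          refine ⟨Or.inr hxv, Or.inl ?_⟩
          rw [hlk1]; exact hxv
      · by_cases hkl1 : k = l + 1
        · -- share v = f k
          have hvw2 : f k ≠ f l := fun hc => hlk (hfinj hc).symm
          have hx2b : x ∈ seg (p (f l)) (p (f k)) := by
            rw [hkl1]; exact hx2
          have hxv : x ∈ ({p (f k)} : Set Pt) := by
            apply hGC (f k) (f (k+1)) (f l) (hfne k) hvw2
              (fun hc => hlk1 (hfinj hc).symm)
            exact ⟨hx1, by rw [seg_symm]; exact hx2b⟩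
          refine ⟨Or.inl hxv, Or.inr ?_⟩
          rw [← hkl1]; exact hxv
        · -- disjoint
          exfalso
          have hne1 : f l ≠ f k := fun hc => hlk (hfinj hc)
          have hne2 : f l ≠ f (k+1) := fun hc => hlk1 (hfinj hc)
          have hne3 : f (l+1) ≠ f k := fun hc => hkl1 (hfinj hc).symm
          have hne4 : f (l+1) ≠ f (k+1) := fun hc => hlk (add_right_cancel (hfinj hc))
          have hc1 : cyc (f (k+1)) (f l) (f k) := by
            rcases cyc_tricho (hfne k) hne1 hne2 with h | h
            · exact absurd rfl (harc k (f l) h l)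
            · exact h
          have hc2 : cyc (f (k+1)) (f (l+1)) (f k) := by
            rcases cyc_tricho (hfne k) hne3 hne4 with h | h
            · exact absurd rfl (harc k (f (l+1)) h (l+1))
            · exact h
          have hGBe := GB hε hor hc1 hc2
          have hxe : x ∈ (∅ : Set Pt) := by
            rw [← hGBe]
            exact ⟨by rw [seg_symm]; exact hx1, hx2⟩
          simp at hxe
  · -- chord vs boundary edge
    intro k i
    intro x hx
    obtain ⟨hx1, hx2⟩ := hx
    have hx2' : x ∈ seg (p i) (p (i+1)) := hx2
    have hδ := hgap2 k
    have hab := hfne k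
    by_cases h1 : i = f k
    · have hne2 : f (k+1) ≠ i + 1 := by
        rw [h1]; exact hfne1 k
      have hne3 : f k ≠ i + 1 := by
        rw [h1]
        exact (fin_succ_ne hn2 (f k)).symm
      have hx2b : x ∈ seg (p (f k)) (p (i+1)) := by
        rw [← h1]; exact hx2'
      have hxv : x ∈ ({p (f k)} : Set Pt) :=
        hGC (f k) (f (k+1)) (i+1) hab hne3 hne2 ⟨hx1, hx2b⟩
      refine ⟨Or.inl hxv, Or.inl ?_⟩
      rw [h1]; exact hxv
    · by_cases h2 : i + 1 = f k
      · have hne2 : f (k+1) ≠ i := by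
          intro hc
          apply hfne2 k
          rw [← h2, hc]
        have hx2b : x ∈ seg (p (f k)) (p i) := by
          rw [← h2, seg_symm]; exact hx2'
        have hxv : x ∈ ({p (f k)} : Set Pt) :=
          hGC (f k) (f (k+1)) i hab (fun hc => h1 hc.symm) hne2 ⟨hx1, hx2b⟩
        refine ⟨Or.inl hxv, Or.inr ?_⟩
        rw [h2]; exact hxv
      · by_cases h3 : i = f (k+1)
        · have hne2 : f (k+1) ≠ i + 1 := by
            rw [h3]; exact (fin_succ_ne hn2 (f (k+1))).symm
          have hne3 : f k ≠ i + 1 := by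
            intro hc
            apply hfne2 k
            rw [hc, h3]
          have hx2b : x ∈ seg (p (f (k+1))) (p (i+1)) := by
            rw [← h3]; exact hx2'
          have hxv : x ∈ ({p (f (k+1))} : Set Pt) :=
            hGC (f (k+1)) (f k) (i+1) hab.symm hne2 hne3
              ⟨by rw [seg_symm]; exact hx1, hx2b⟩
          refine ⟨Or.inr hxv, Or.inl ?_⟩
          rw [h3]; exact hxv
        · by_cases h4 : i + 1 = f (k+1)
          · have hne3 : f k ≠ i := fun hc => h1 hc.symm
            have hx2b : x ∈ seg (p (f (k+1))) (p i) := by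
              rw [← h4, seg_symm]; exact hx2'
            have hxv : x ∈ ({p (f (k+1))} : Set Pt) :=
              hGC (f (k+1)) (f k) i hab.symm (fun hc => h3 hc.symm) hne3
                ⟨by rw [seg_symm]; exact hx1, hx2b⟩
            refine ⟨Or.inr hxv, Or.inr ?_⟩
            rw [h4]; exact hxv
          · exfalso
            rcases edge_same_side hn2 hab h1 h3 h2 h4 with ⟨g1, g2⟩ | ⟨g1, g2⟩
            · have hGBe := GB hε hor g1 g2
              have hxe : x ∈ (∅ : Set Pt) := by
                rw [← hGBe]; exact ⟨hx1, hx2'⟩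
              simp at hxe
            · have hGBe := GB hε hor g1 g2
              have hxe : x ∈ (∅ : Set Pt) := by
                rw [← hGBe]
                exact ⟨by rw [seg_symm]; exact hx1, hx2'⟩
              simp at hxe

/-- A maximum-size cycle graph planarly polygon-embeddable in a convex polygon with `n ≥ 4`
vertices has exactly `⌊n / 2⌋` nodes: a cycle on `⌊n / 2⌋` nodes embeds, and no cycle on more
nodes does. (In a convex polygon every chord lies inside the polygon, so the bounded region is
the convex hull of the vertices.) -/
theorem stmt_13 (n : ℕ) [NeZero n] [NeZero (n / 2)] (hn : 4 ≤ n)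
    (p : Fin n → Pt) (hP : IsConvexPolygon p) :
    (∃ f : Fin (n / 2) → Fin n, IsCycleEmbedding p (convexHull ℝ (Set.range p)) f) ∧
    (∀ (m : ℕ) [NeZero m] (f : Fin m → Fin n),
      IsCycleEmbedding p (convexHull ℝ (Set.range p)) f → m ≤ n / 2) := by
  obtain ⟨⟨hn3, hpinj, hsimple⟩, hI⟩ := hP
  obtain ⟨ε, hε, hor⟩ := master (by omega) hpinj hI hsimple
  constructor
  · exact lower hn (by omega) (by omega) (by omega) hpinj hI hε hor
  · intro m _ f hf
    obtain ⟨hfinj, hnadj, hin, hNC, hedge⟩ := hf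
    by_cases hm3 : 3 ≤ m
    · have h2m := upper (by omega) hm3 hpinj hε hor f hfinj hnadj hNC
      omega
    · omega
end

section
/- A maximum-size path graph planarly polygon-embeddable in a convex polygon with n ≥ 3 vertices has exactly n - 3 edges. -/
open Set Function

/-- A straight-line planar polygon embedding of a path graph with `e` edges into the polygon
`p`: nodes map injectively to polygon vertices, every path edge is a diagonal (endpoints
non-adjacent), distinct path edges meet at most in shared endpoints, and path edges meet
polygon boundary edges at most in shared endpoints. -/
def IsPathEmbedding {n e : ℕ} [NeZero n] (p : Fin n → Pt) (f : Fin (e + 1) → Fin n) : Prop :=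
  Function.Injective f ∧
  (∀ k : Fin e, ¬ adjV (f k.castSucc) (f k.succ)) ∧
  (∀ k l : Fin e, k ≠ l →
    NC (p (f k.castSucc)) (p (f k.succ)) (p (f l.castSucc)) (p (f l.succ))) ∧
  (∀ k : Fin e, ∀ i : Fin n,
    seg (p (f k.castSucc)) (p (f k.succ)) ∩ edgeSeg p i ⊆
      ({p (f k.castSucc), p (f k.succ)} ∩ {p i, p (i + 1)} : Set Pt))

namespace Aux

lemma cross2_affine (x y u v : Pt) (t : ℝ) :
    cross2 x y (u + t • (v - u)) = cross2 x y u + t * (cross2 x y v - cross2 x y u) := by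
  simp only [cross2, Prod.fst_add, Prod.snd_add, Prod.smul_fst, Prod.smul_snd,
    Prod.fst_sub, Prod.snd_sub, smul_eq_mul]
  ring

lemma cross2_swap (a b c : Pt) : cross2 b a c = - cross2 a b c := by
  simp only [cross2]; ring

lemma cross2_swap23 (a b c : Pt) : cross2 a c b = - cross2 a b c := by
  simp only [cross2]; ring

lemma cross2_self_right (a b : Pt) : cross2 a b b = 0 := by simp only [cross2]; ring
lemma cross2_self_mid (a b : Pt) : cross2 a b a = 0 := by simp only [cross2]; ring

lemma mem_seg_iff {a b z : Pt} : z ∈ seg a b ↔ ∃ t : ℝ, 0 ≤ t ∧ t ≤ 1 ∧ z = a + t • (b - a) := by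
  rw [seg, segment_eq_image']
  constructor
  · rintro ⟨t, ⟨h0, h1⟩, rfl⟩; exact ⟨t, h0, h1, rfl⟩
  · rintro ⟨t, h0, h1, rfl⟩; exact ⟨t, ⟨h0, h1⟩, rfl⟩

lemma seg_symm (a b : Pt) : seg a b = seg b a := segment_symm ℝ a b

/-- parametrize a point on the line through `a b`. -/
lemma line_param {a b x : Pt} (hab : a ≠ b) (h : cross2 a b x = 0) :
    ∃ t : ℝ, x = a + t • (b - a) := by
  have hab' : b.1 - a.1 ≠ 0 ∨ b.2 - a.2 ≠ 0 := by
    by_contra hc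
    push_neg at hc
    exact hab (Prod.ext (by linarith [hc.1]) (by linarith [hc.2])).symm
  simp only [cross2] at h
  rcases hab' with h1 | h2
  · refine ⟨(x.1 - a.1) / (b.1 - a.1), ?_⟩
    have hx2 : x.2 - a.2 = (x.1 - a.1) / (b.1 - a.1) * (b.2 - a.2) := by
      field_simp
      nlinarith [h]
    have hx1 : x.1 - a.1 = (x.1 - a.1) / (b.1 - a.1) * (b.1 - a.1) := by field_simp
    refine Prod.ext ?_ ?_ <;>
      simp only [Prod.fst_add, Prod.snd_add, Prod.smul_fst, Prod.smul_snd, Prod.fst_sub,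
        Prod.snd_sub, smul_eq_mul] <;> linarith [hx1, hx2]
  · refine ⟨(x.2 - a.2) / (b.2 - a.2), ?_⟩
    have hx1 : x.1 - a.1 = (x.2 - a.2) / (b.2 - a.2) * (b.1 - a.1) := by
      field_simp
      nlinarith [h]
    have hx2 : x.2 - a.2 = (x.2 - a.2) / (b.2 - a.2) * (b.2 - a.2) := by field_simp
    refine Prod.ext ?_ ?_ <;>
      simp only [Prod.fst_add, Prod.snd_add, Prod.smul_fst, Prod.smul_snd, Prod.fst_sub,
        Prod.snd_sub, smul_eq_mul] <;> linarith [hx1, hx2]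

end Aux

namespace Aux

/-- convex independence of a finite point set -/
def CI (S : Finset Pt) : Prop := ∀ x ∈ S, x ∉ convexHull ℝ (↑(S.erase x) : Set Pt)

lemma CI.mono {S T : Finset Pt} (h : CI S) (hTS : T ⊆ S) : CI T := by
  intro x hx hmem
  exact h x (hTS hx) (convexHull_mono (by
    intro y hy
    simp only [Finset.coe_erase, Set.mem_diff, Set.mem_singleton_iff] at hy ⊢
    exact ⟨hTS hy.1, hy.2⟩) hmem)

lemma seg_subset_hull {a b : Pt} {s : Set Pt} (ha : a ∈ convexHull ℝ s) (hb : b ∈ convexHull ℝ s) :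
    seg a b ⊆ convexHull ℝ s :=
  (convex_convexHull ℝ s).segment_subset ha hb

lemma mem_hull_of_mem {s : Set Pt} {a : Pt} (h : a ∈ s) : a ∈ convexHull ℝ s :=
  subset_convexHull ℝ s h

/-- trichotomy: from a CI set, no point lies on a line through two others. -/
lemma CI.cross2_ne {S : Finset Pt} (hS : CI S) {a b x : Pt}
    (ha : a ∈ S) (hb : b ∈ S) (hx : x ∈ S)
    (hab : a ≠ b) (hax : a ≠ x) (hbx : b ≠ x) : cross2 a b x ≠ 0 := by
  intro h0
  obtain ⟨t, rfl⟩ := line_param hab h0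
  set x := a + t • (b - a) with hxdef
  have hmem : ∀ u v w : Pt, u ∈ S → v ∈ S → u ≠ w → v ≠ w → seg u v ⊆ convexHull ℝ (↑(S.erase w) : Set Pt) := by
    intro u v w hu hv huw hvw
    exact seg_subset_hull (mem_hull_of_mem (by simp only [Finset.coe_erase, Set.mem_diff, Set.mem_singleton_iff]; exact ⟨hu, huw⟩))
      (mem_hull_of_mem (by simp only [Finset.coe_erase, Set.mem_diff, Set.mem_singleton_iff]; exact ⟨hv, hvw⟩))
  rcases le_or_gt t 0 with ht | ht
  · rcases eq_or_lt_of_le ht with rfl | ht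
    · exact hax (by simp [hxdef])
    · -- a ∈ seg x b
      have : a ∈ seg x b := by
        rw [mem_seg_iff]
        refine ⟨(-t)/(1-t), div_nonneg (by linarith) (by linarith), by rw [div_le_one (by linarith)]; linarith, ?_⟩
        have : b - x = (1 - t) • (b - a) := by
          rw [hxdef]; module
        rw [this, smul_smul, hxdef]
        have h1t : (1:ℝ) - t ≠ 0 := by linarith
        rw [div_mul_cancel₀ _ h1t]
        module
      exact hS a ha (hmem x b a hx hb (Ne.symm hax) (Ne.symm hab) this)
  · rcases le_or_gt t 1 with ht1 | ht1
    · -- x ∈ seg a b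
      have : x ∈ seg a b := mem_seg_iff.2 ⟨t, le_of_lt ht, ht1, rfl⟩
      exact hS x hx (hmem a b x ha hb hax hbx this)
    · -- b ∈ seg a x
      have : b ∈ seg a x := by
        rw [mem_seg_iff]
        refine ⟨1/t, by positivity, by rw [div_le_one (by linarith)]; linarith, ?_⟩
        have : x - a = t • (b - a) := by rw [hxdef]; module
        rw [this, smul_smul, one_div, inv_mul_cancel₀ (by linarith)]
        module
      exact hS b hb (hmem a x b ha hx hab (Ne.symm hbx) this)

end Aux

namespace Aux

lemma param_cases {a b z : Pt} (μ : ℝ) (hz : z = a + μ • (b - a)) :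
    z ∈ seg a b ∨ (b ∈ seg a z) ∨ (a ∈ seg z b) := by
  rcases le_or_gt μ 0 with hμ | hμ
  · rcases eq_or_lt_of_le hμ with rfl | hμ
    · left; rw [mem_seg_iff]; exact ⟨0, le_refl _, zero_le_one, by rw [hz]⟩
    · right; right
      rw [mem_seg_iff]
      refine ⟨(-μ)/(1-μ), div_nonneg (by linarith) (by linarith),
        by rw [div_le_one (by linarith)]; linarith, ?_⟩
      have : b - z = (1 - μ) • (b - a) := by rw [hz]; module
      rw [this, smul_smul, div_mul_cancel₀ _ (by linarith : (1:ℝ) - μ ≠ 0), hz]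
      module
  · rcases le_or_gt μ 1 with hμ1 | hμ1
    · left; exact mem_seg_iff.2 ⟨μ, le_of_lt hμ, hμ1, hz⟩
    · right; left
      rw [mem_seg_iff]
      refine ⟨1/μ, by positivity, by rw [div_le_one (by linarith)]; linarith, ?_⟩
      have : z - a = μ • (b - a) := by rw [hz]; module
      rw [this, smul_smul, one_div, inv_mul_cancel₀ (by linarith)]
      module

/-- If two segments with all four endpoints distinct in a CI set meet only at shared
endpoints, then `x` and `y` are strictly on the same side of line `ab`. -/
lemma same_side {S : Finset Pt} (hS : CI S) {a b x y : Pt}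
    (ha : a ∈ S) (hb : b ∈ S) (hx : x ∈ S) (hy : y ∈ S)
    (hab : a ≠ b) (hax : a ≠ x) (hay : a ≠ y) (hbx : b ≠ x) (hby : b ≠ y) (hxy : x ≠ y)
    (hnc : seg a b ∩ seg x y ⊆ ({a, b} ∩ {x, y} : Set Pt)) :
    0 < cross2 a b x * cross2 a b y := by
  have hcx : cross2 a b x ≠ 0 := hS.cross2_ne ha hb hx hab hax hbx
  have hcy : cross2 a b y ≠ 0 := hS.cross2_ne ha hb hy hab hay hby
  rcases lt_or_gt_of_ne (mul_ne_zero hcx hcy) with hneg | hpos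
  · exfalso
    -- opposite sides: find crossing point z on open segment x y with cross2 a b z = 0
    set s := cross2 a b x
    set u := cross2 a b y
    have hsu : s ≠ u := by
      intro h; rw [h] at hneg; nlinarith
    set t : ℝ := s / (s - u) with htdef
    have hsub : s - u ≠ 0 := sub_ne_zero.2 hsu
    have ht0 : 0 < t := by
      rcases mul_neg_iff.1 hneg with ⟨hs, hu⟩ | ⟨hs, hu⟩
      · exact div_pos hs (by linarith)
      · exact div_pos_of_neg_of_neg hs (by linarith)
    have ht1 : t < 1 := by
      rcases mul_neg_iff.1 hneg with ⟨hs, hu⟩ | ⟨hs, hu⟩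
      · rw [div_lt_one (by linarith)]; linarith
      · rw [div_lt_one_of_neg (by linarith)]; linarith
    -- the crossing point
    set z : Pt := x + t • (y - x) with hzdef
    have hzxy : z ∈ seg x y := mem_seg_iff.2 ⟨t, le_of_lt ht0, le_of_lt ht1, rfl⟩
    have hzx : z ≠ x := by
      intro h
      have h0 : t • (y - x) = 0 := by
        have : x + t • (y - x) = x + 0 := by rw [add_zero]; exact hzdef ▸ h
        exact add_left_cancel this
      rcases smul_eq_zero.1 h0 with h' | h'
      · exact absurd h' (ne_of_gt ht0)
      · exact hxy (sub_eq_zero.1 h').symm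
    have hzy : z ≠ y := by
      intro h
      have h0 : (1 - t) • (y - x) = 0 := by
        have hy' : x + t • (y - x) = y := hzdef ▸ h
        have : (1 - t) • (y - x) = y - (x + t • (y - x)) := by module
        rw [this, hy', sub_self]
      rcases smul_eq_zero.1 h0 with h' | h'
      · have : (1:ℝ) - t = 0 := h'
        linarith
      · exact hxy (sub_eq_zero.1 h').symm
    have hcz : cross2 a b z = 0 := by
      rw [hzdef, cross2_affine]
      have : cross2 a b y - cross2 a b x = -(s - u) := by simp only [s, u]; ring
      rw [this, htdef]
      show cross2 a b x + s / (s - u) * -(s - u) = 0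
      have hsx : cross2 a b x = s := rfl
      rw [hsx]
      field_simp
      ring
    obtain ⟨μ, hμ⟩ := line_param hab hcz
    have hzhull : z ∈ seg x y := hzxy
    rcases param_cases μ hμ with hseg | hb' | ha'
    · -- z in both segments: contradiction with hnc
      have := hnc ⟨hseg, hzxy⟩
      rcases this.2 with h | h
      · exact hzx h
      · exact hzy h
    · -- b ∈ seg a z ⊆ hull (S.erase b)
      refine hS b hb ?_
      have haS : a ∈ convexHull ℝ (↑(S.erase b) : Set Pt) :=
        mem_hull_of_mem (by simp only [Finset.coe_erase, Set.mem_diff, Set.mem_singleton_iff]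
                            exact ⟨ha, hab⟩)
      have hzS : z ∈ convexHull ℝ (↑(S.erase b) : Set Pt) := by
        refine seg_subset_hull (a := x) (b := y) ?_ ?_ hzxy <;> refine mem_hull_of_mem ?_
        · simp only [Finset.coe_erase, Set.mem_diff, Set.mem_singleton_iff]
          exact ⟨hx, Ne.symm hbx⟩
        · simp only [Finset.coe_erase, Set.mem_diff, Set.mem_singleton_iff]
          exact ⟨hy, Ne.symm hby⟩
      exact seg_subset_hull haS hzS hb'
    · -- a ∈ seg z b ⊆ hull (S.erase a)
      refine hS a ha ?_
      have hbS : b ∈ convexHull ℝ (↑(S.erase a) : Set Pt) :=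
        mem_hull_of_mem (by simp only [Finset.coe_erase, Set.mem_diff, Set.mem_singleton_iff]
                            exact ⟨hb, Ne.symm hab⟩)
      have hzS : z ∈ convexHull ℝ (↑(S.erase a) : Set Pt) := by
        refine seg_subset_hull (a := x) (b := y) ?_ ?_ hzxy <;> refine mem_hull_of_mem ?_
        · simp only [Finset.coe_erase, Set.mem_diff, Set.mem_singleton_iff]
          exact ⟨hx, Ne.symm hax⟩
        · simp only [Finset.coe_erase, Set.mem_diff, Set.mem_singleton_iff]
          exact ⟨hy, Ne.symm hay⟩
      exact seg_subset_hull hzS hbS ha'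
  · exact hpos

end Aux

namespace Aux

def NCs (e f : Sym2 Pt) : Prop :=
  ∀ a b c d : Pt, e = s(a, b) → f = s(c, d) → seg a b ∩ seg c d ⊆ ({a, b} ∩ {c, d} : Set Pt)

def IsChord (S : Finset Pt) (e : Sym2 Pt) : Prop :=
  ∃ a b, a ∈ S ∧ b ∈ S ∧ a ≠ b ∧ e = s(a, b)

lemma ncs_of {a b c d : Pt} (h : seg a b ∩ seg c d ⊆ ({a, b} ∩ {c, d} : Set Pt)) :
    NCs s(a, b) s(c, d) := by
  intro a' b' c' d' h1 h2
  rw [Sym2.eq_iff] at h1 h2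
  have hseg1 : seg a' b' = seg a b := by
    rcases h1 with ⟨rfl, rfl⟩ | ⟨rfl, rfl⟩
    · rfl
    · exact seg_symm _ _
  have hset1 : ({a', b'} : Set Pt) = {a, b} := by
    rcases h1 with ⟨rfl, rfl⟩ | ⟨rfl, rfl⟩
    · rfl
    · exact Set.pair_comm _ _
  have hseg2 : seg c' d' = seg c d := by
    rcases h2 with ⟨rfl, rfl⟩ | ⟨rfl, rfl⟩
    · rfl
    · exact seg_symm _ _
  have hset2 : ({c', d'} : Set Pt) = {c, d} := by
    rcases h2 with ⟨rfl, rfl⟩ | ⟨rfl, rfl⟩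
    · rfl
    · exact Set.pair_comm _ _
  rw [hseg1, hseg2, hset1, hset2]
  exact h

lemma ncs_symm {e f : Sym2 Pt} (h : NCs e f) : NCs f e := by
  intro a b c d h1 h2
  have := h c d a b h2 h1
  rw [Set.inter_comm (seg c d), Set.inter_comm ({c, d} : Set Pt)] at this
  exact this

/-- the "hull chord" predicate -/
def HullC (S : Finset Pt) (e : Sym2 Pt) : Prop :=
  ∃ a b, e = s(a, b) ∧
    ((∀ w ∈ S, w ≠ a → w ≠ b → 0 < cross2 a b w) ∨ (∀ w ∈ S, w ≠ a → w ≠ b → cross2 a b w < 0))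

/-- at most two hull chords at each vertex -/
lemma hull_deg {S : Finset Pt} (hS : CI S) {v x1 x2 x3 : Pt}
    (hv : v ∈ S) (h1 : x1 ∈ S) (h2 : x2 ∈ S) (h3 : x3 ∈ S)
    (hv1 : x1 ≠ v) (hv2 : x2 ≠ v) (hv3 : x3 ≠ v)
    (h12 : x1 ≠ x2) (h13 : x1 ≠ x3) (h23 : x2 ≠ x3)
    (H1 : HullC S s(v, x1)) (H2 : HullC S s(v, x2)) (H3 : HullC S s(v, x3)) : False := by
  -- normalize each HullC to the (v, xi) form
  have norm : ∀ x : Pt, x ≠ v → HullC S s(v, x) →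
      (∀ w ∈ S, w ≠ v → w ≠ x → 0 < cross2 v x w) ∨
      (∀ w ∈ S, w ≠ v → w ≠ x → cross2 v x w < 0) := by
    intro x hxv ⟨a, b, hab, hdisj⟩
    rw [Sym2.eq_iff] at hab
    rcases hab with ⟨rfl, rfl⟩ | ⟨rfl, rfl⟩
    · exact hdisj
    · rcases hdisj with h | h
      · right; intro w hw hwv hwx
        have := h w hw hwx hwv
        rw [cross2_swap] at this; linarith
      · left; intro w hw hwv hwx
        have := h w hw hwx hwv
        rw [cross2_swap] at this; linarith
  have K1 := norm x1 hv1 H1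
  have K2 := norm x2 hv2 H2
  have K3 := norm x3 hv3 H3
  have e12 : cross2 v x2 x1 = - cross2 v x1 x2 := cross2_swap23 v x1 x2
  have e13 : cross2 v x3 x1 = - cross2 v x1 x3 := cross2_swap23 v x1 x3
  have e23 : cross2 v x3 x2 = - cross2 v x2 x3 := cross2_swap23 v x2 x3
  have a12 : cross2 v x1 x2 ≠ 0 ∧ True := ⟨hS.cross2_ne hv h1 h2 (Ne.symm hv1) (Ne.symm hv2) h12, trivial⟩
  rcases K1 with K1 | K1 <;> rcases K2 with K2 | K2 <;> rcases K3 with K3 | K3 <;>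
    [skip; skip; skip; skip; skip; skip; skip; skip] <;>
  · have b12 := K1 x2 h2 hv2 (Ne.symm h12)
    have b13 := K1 x3 h3 hv3 (Ne.symm h13)
    have b21 := K2 x1 h1 hv1 h12
    have b23 := K2 x3 h3 hv3 (Ne.symm h23)
    have b31 := K3 x1 h1 hv1 h13
    have b32 := K3 x2 h2 hv2 h23
    rw [e12] at b21
    rw [e13] at b31
    rw [e23] at b32
    linarith
end Aux

namespace Aux

lemma chord_through {S : Finset Pt} {e : Sym2 Pt} {v : Pt} (h : IsChord S e) (hv : v ∈ e) :
    ∃ x, x ∈ S ∧ x ≠ v ∧ e = s(v, x) := by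
  obtain ⟨a, b, ha, hb, hab, rfl⟩ := h
  rw [Sym2.mem_iff] at hv
  rcases hv with rfl | rfl
  · exact ⟨b, hb, Ne.symm hab, rfl⟩
  · exact ⟨a, ha, hab, Sym2.eq_swap⟩

lemma chord_bound : ∀ (N : ℕ) (S : Finset Pt), S.card ≤ N → CI S →
    ∀ E : Finset (Sym2 Pt), (∀ e ∈ E, IsChord S e) → ((↑E : Set (Sym2 Pt)).Pairwise NCs) →
    E.card ≤ 2 * S.card - 3 := by
  intro N
  induction N with
  | zero =>
    intro S hc _ E hE _
    have : E = ∅ := by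
      rcases Finset.eq_empty_or_nonempty E with rfl | ⟨e, he⟩
      · rfl
      · obtain ⟨a, b, ha, hb, hab, rfl⟩ := hE e he
        exact absurd (Finset.one_lt_card.2 ⟨a, ha, b, hb, hab⟩) (by omega)
    simp [this]
  | succ N ih =>
    intro S hcard hCI E hE hP
    classical
    by_cases hsmall : S.card ≤ 2
    · -- small case
      rcases Finset.eq_empty_or_nonempty E with rfl | ⟨e0, he0⟩
      · simp
      obtain ⟨a, b, ha, hb, hab, he0ab⟩ := hE e0 he0
      have hS2 : S = {a, b} := by
        refine (Finset.eq_of_subset_of_card_le ?_ ?_).symm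
        · intro w hw; simp only [Finset.mem_insert, Finset.mem_singleton] at hw
          rcases hw with rfl | rfl; exacts [ha, hb]
        · rw [Finset.card_pair hab]; exact hsmall
      have hE1 : E.card ≤ 1 := by
        apply Finset.card_le_one.2
        intro e he e' he'
        obtain ⟨c, d, hc, hd, hcd, rfl⟩ := hE e he
        obtain ⟨c', d', hc', hd', hcd', rfl⟩ := hE e' he'
        have hmem : ∀ u v : Pt, u ∈ S → v ∈ S → u ≠ v → s(u, v) = s(a, b) := by
          intro u v hu hv huv
          rw [hS2, Finset.mem_insert, Finset.mem_singleton] at hu hv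
          rcases hu with rfl | rfl <;> rcases hv with rfl | rfl
          · exact absurd rfl huv
          · rfl
          · exact Sym2.eq_swap
          · exact absurd rfl huv
        rw [hmem c d hc hd hcd, hmem c' d' hc' hd' hcd']
      have : 2 * S.card - 3 ≥ 1 := by rw [hS2, Finset.card_pair hab]
      omega
    · push_neg at hsmall
      by_cases hhull : ∀ e ∈ E, HullC S e
      · -- all hull chords : E.card ≤ S.card
        have key : ∑ e ∈ E, (S.filter (· ∈ e)).card = ∑ v ∈ S, (E.filter (fun e => v ∈ e)).card := by
          simp only [Finset.card_filter]
          exact Finset.sum_comm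
        have hleft : ∑ e ∈ E, (S.filter (· ∈ e)).card = 2 * E.card := by
          rw [Finset.sum_congr rfl (fun e he => ?_), Finset.sum_const, smul_eq_mul, mul_comm]
          obtain ⟨a, b, ha, hb, hab, rfl⟩ := hE e he
          have : S.filter (· ∈ s(a, b)) = {a, b} := by
            ext w
            simp only [Finset.mem_filter, Sym2.mem_iff, Finset.mem_insert, Finset.mem_singleton]
            constructor
            · rintro ⟨_, h⟩; exact h
            · rintro (rfl | rfl); exacts [⟨ha, Or.inl rfl⟩, ⟨hb, Or.inr rfl⟩]
          rw [this, Finset.card_pair hab]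
        have hright : ∀ v ∈ S, (E.filter (fun e => v ∈ e)).card ≤ 2 := by
          intro v hv
          by_contra hdeg
          push_neg at hdeg
          obtain ⟨e1, e2, e3, he1, he2, he3, h12, h13, h23⟩ := Finset.two_lt_card_iff.1 hdeg
          rw [Finset.mem_filter] at he1 he2 he3
          obtain ⟨x1, hx1S, hx1v, hex1⟩ := chord_through (hE e1 he1.1) he1.2
          obtain ⟨x2, hx2S, hx2v, hex2⟩ := chord_through (hE e2 he2.1) he2.2
          obtain ⟨x3, hx3S, hx3v, hex3⟩ := chord_through (hE e3 he3.1) he3.2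
          have hx12 : x1 ≠ x2 := fun h => h12 (by rw [hex1, hex2, h])
          have hx13 : x1 ≠ x3 := fun h => h13 (by rw [hex1, hex3, h])
          have hx23 : x2 ≠ x3 := fun h => h23 (by rw [hex2, hex3, h])
          exact hull_deg hCI hv hx1S hx2S hx3S hx1v hx2v hx3v hx12 hx13 hx23
            (hex1 ▸ hhull e1 he1.1) (hex2 ▸ hhull e2 he2.1) (hex3 ▸ hhull e3 he3.1)
        have : 2 * E.card ≤ 2 * S.card := by
          rw [← hleft, key]
          calc ∑ v ∈ S, (E.filter (fun e => v ∈ e)).card ≤ ∑ v ∈ S, 2 :=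
                Finset.sum_le_sum hright
            _ = 2 * S.card := by rw [Finset.sum_const, smul_eq_mul, mul_comm]
        omega
      · -- split at a non-hull chord
        push_neg at hhull
        obtain ⟨e, heE, hnh⟩ := hhull
        obtain ⟨a, b, ha, hb, hab, heab⟩ := hE e heE
        have hnh' := hnh
        rw [heab] at hnh'
        simp only [HullC, not_exists, not_and, not_or] at hnh'
        obtain ⟨h1, h2⟩ := hnh' a b rfl
        push_neg at h1 h2
        obtain ⟨y, hyS, hya, hyb, hy0⟩ := h1
        obtain ⟨x, hxS, hxa, hxb, hx0⟩ := h2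
        have hyneg : cross2 a b y < 0 :=
          lt_of_le_of_ne hy0 (hCI.cross2_ne ha hb hyS hab (Ne.symm hya) (Ne.symm hyb))
        have hxpos : 0 < cross2 a b x :=
          lt_of_le_of_ne hx0 (Ne.symm (hCI.cross2_ne ha hb hxS hab (Ne.symm hxa) (Ne.symm hxb)))
        set Sp := S.filter (fun w => w = a ∨ w = b ∨ 0 < cross2 a b w) with hSp
        set Sm := S.filter (fun w => w = a ∨ w = b ∨ cross2 a b w < 0) with hSm
        have haSp : a ∈ Sp := Finset.mem_filter.2 ⟨ha, Or.inl rfl⟩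
        have hbSp : b ∈ Sp := Finset.mem_filter.2 ⟨hb, Or.inr (Or.inl rfl)⟩
        have haSm : a ∈ Sm := Finset.mem_filter.2 ⟨ha, Or.inl rfl⟩
        have hbSm : b ∈ Sm := Finset.mem_filter.2 ⟨hb, Or.inr (Or.inl rfl)⟩
        have hxSp : x ∈ Sp := Finset.mem_filter.2 ⟨hxS, Or.inr (Or.inr hxpos)⟩
        have hySm : y ∈ Sm := Finset.mem_filter.2 ⟨hyS, Or.inr (Or.inr hyneg)⟩
        have hxSm : x ∉ Sm := by
          intro h
          rcases (Finset.mem_filter.1 h).2 with rfl | rfl | h'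
          exacts [hxa rfl, hxb rfl, absurd hxpos (by linarith)]
        have hySp : y ∉ Sp := by
          intro h
          rcases (Finset.mem_filter.1 h).2 with rfl | rfl | h'
          exacts [hya rfl, hyb rfl, absurd hyneg (by linarith)]
        have hunion : Sp ∪ Sm = S := by
          ext w
          simp only [Finset.mem_union, hSp, hSm, Finset.mem_filter]
          constructor
          · rintro (⟨h, _⟩ | ⟨h, _⟩) <;> exact h
          · intro hw
            by_cases hwa : w = a
            · exact Or.inl ⟨hw, Or.inl hwa⟩
            by_cases hwb : w = b
            · exact Or.inl ⟨hw, Or.inr (Or.inl hwb)⟩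
            rcases lt_trichotomy (cross2 a b w) 0 with h | h | h
            · exact Or.inr ⟨hw, Or.inr (Or.inr h)⟩
            · exact absurd h (hCI.cross2_ne ha hb hw hab (Ne.symm hwa) (Ne.symm hwb))
            · exact Or.inl ⟨hw, Or.inr (Or.inr h)⟩
        have hinter : Sp ∩ Sm = {a, b} := by
          ext w
          simp only [Finset.mem_inter, hSp, hSm, Finset.mem_filter, Finset.mem_insert,
            Finset.mem_singleton]
          constructor
          · rintro ⟨⟨_, rfl | rfl | hp⟩, ⟨_, h⟩⟩
            · exact Or.inl rfl
            · exact Or.inr rfl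
            · rcases h with rfl | rfl | hm
              · exact Or.inl rfl
              · exact Or.inr rfl
              · linarith
          · rintro (rfl | rfl)
            · exact ⟨⟨ha, Or.inl rfl⟩, ⟨ha, Or.inl rfl⟩⟩
            · exact ⟨⟨hb, Or.inr (Or.inl rfl)⟩, ⟨hb, Or.inr (Or.inl rfl)⟩⟩
        have hcardsum : Sp.card + Sm.card = S.card + 2 := by
          have := Finset.card_union_add_card_inter Sp Sm
          rw [hunion, hinter, Finset.card_pair hab] at this
          omega
        set Ep := E.filter (fun e' => ∀ w ∈ e', w ∈ Sp) with hEp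
        set Em := E.filter (fun e' => ∀ w ∈ e', w ∈ Sm) with hEm
        -- every chord of E is in Ep or Em
        have hcover : ∀ e' ∈ E, e' ∈ Ep ∨ e' ∈ Em := by
          intro e' he'
          obtain ⟨u, v, huS, hvS, huv, he'uv⟩ := hE e' he'
          have hmem : ∀ T : Finset Pt, u ∈ T → v ∈ T → (∀ w ∈ e', w ∈ T) := by
            intro T hu hv w hw
            rw [he'uv, Sym2.mem_iff] at hw
            rcases hw with rfl | rfl <;> assumption
          have keyuv : (u ∈ Sp ∧ v ∈ Sp) ∨ (u ∈ Sm ∧ v ∈ Sm) := by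
            by_cases hu' : u = a ∨ u = b
            · have huboth : u ∈ Sp ∧ u ∈ Sm := by
                rcases hu' with rfl | rfl
                exacts [⟨haSp, haSm⟩, ⟨hbSp, hbSm⟩]
              by_cases hv' : v = a ∨ v = b
              · left
                refine ⟨huboth.1, ?_⟩
                rcases hv' with rfl | rfl; exacts [haSp, hbSp]
              · push_neg at hv'
                rcases lt_trichotomy (cross2 a b v) 0 with h | h | h
                · exact Or.inr ⟨huboth.2, Finset.mem_filter.2 ⟨hvS, Or.inr (Or.inr h)⟩⟩
                · exact absurd h (hCI.cross2_ne ha hb hvS hab (Ne.symm hv'.1) (Ne.symm hv'.2))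
                · exact Or.inl ⟨huboth.1, Finset.mem_filter.2 ⟨hvS, Or.inr (Or.inr h)⟩⟩
            · push_neg at hu'
              by_cases hv' : v = a ∨ v = b
              · have hvboth : v ∈ Sp ∧ v ∈ Sm := by
                  rcases hv' with rfl | rfl
                  exacts [⟨haSp, haSm⟩, ⟨hbSp, hbSm⟩]
                rcases lt_trichotomy (cross2 a b u) 0 with h | h | h
                · exact Or.inr ⟨Finset.mem_filter.2 ⟨huS, Or.inr (Or.inr h)⟩, hvboth.2⟩
                · exact absurd h (hCI.cross2_ne ha hb huS hab (Ne.symm hu'.1) (Ne.symm hu'.2))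
                · exact Or.inl ⟨Finset.mem_filter.2 ⟨huS, Or.inr (Or.inr h)⟩, hvboth.1⟩
              · push_neg at hv'
                have hcu := hCI.cross2_ne ha hb huS hab (Ne.symm hu'.1) (Ne.symm hu'.2)
                have hcv := hCI.cross2_ne ha hb hvS hab (Ne.symm hv'.1) (Ne.symm hv'.2)
                have hne : e ≠ e' := by
                  rw [heab, he'uv]
                  intro hcontra
                  rw [Sym2.eq_iff] at hcontra
                  rcases hcontra with ⟨rfl, _⟩ | ⟨rfl, _⟩
                  · exact hu'.1 rfl
                  · exact hv'.1 rfl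
                have hncs := hP (Finset.mem_coe.2 heE) (Finset.mem_coe.2 he') hne
                have hside := same_side hCI ha hb huS hvS hab (Ne.symm hu'.1) (Ne.symm hv'.1)
                  (Ne.symm hu'.2) (Ne.symm hv'.2) huv (hncs a b u v heab he'uv)
                rcases lt_trichotomy (cross2 a b u) 0 with h | h | h
                · right
                  refine ⟨Finset.mem_filter.2 ⟨huS, Or.inr (Or.inr h)⟩,
                    Finset.mem_filter.2 ⟨hvS, Or.inr (Or.inr ?_)⟩⟩
                  nlinarith
                · exact absurd h hcu
                · left
                  refine ⟨Finset.mem_filter.2 ⟨huS, Or.inr (Or.inr h)⟩,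
                    Finset.mem_filter.2 ⟨hvS, Or.inr (Or.inr ?_)⟩⟩
                  nlinarith
          rcases keyuv with ⟨h1, h2⟩ | ⟨h1, h2⟩
          · exact Or.inl (Finset.mem_filter.2 ⟨he', hmem Sp h1 h2⟩)
          · exact Or.inr (Finset.mem_filter.2 ⟨he', hmem Sm h1 h2⟩)
        have hEunion : E = Ep ∪ Em := by
          ext e'
          constructor
          · intro h
            rcases hcover e' h with h' | h'
            exacts [Finset.mem_union_left _ h', Finset.mem_union_right _ h']
          · intro h
            rcases Finset.mem_union.1 h with h' | h'
            exacts [(Finset.mem_filter.1 h').1, (Finset.mem_filter.1 h').1]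
        have heEp : e ∈ Ep := by
          refine Finset.mem_filter.2 ⟨heE, fun w hw => ?_⟩
          rw [heab, Sym2.mem_iff] at hw
          rcases hw with rfl | rfl; exacts [haSp, hbSp]
        have heEm : e ∈ Em := by
          refine Finset.mem_filter.2 ⟨heE, fun w hw => ?_⟩
          rw [heab, Sym2.mem_iff] at hw
          rcases hw with rfl | rfl; exacts [haSm, hbSm]
        have hEinter : Ep ∩ Em = {e} := by
          ext e'
          simp only [Finset.mem_inter, Finset.mem_singleton]
          constructor
          · rintro ⟨hp, hm⟩
            have he'E := (Finset.mem_filter.1 hp).1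
            obtain ⟨u, v, huS, hvS, huv, he'uv⟩ := hE e' he'E
            have hu : u ∈ Sp ∩ Sm := Finset.mem_inter.2
              ⟨(Finset.mem_filter.1 hp).2 u (by rw [he'uv]; exact Sym2.mem_mk_left u v),
               (Finset.mem_filter.1 hm).2 u (by rw [he'uv]; exact Sym2.mem_mk_left u v)⟩
            have hv : v ∈ Sp ∩ Sm := Finset.mem_inter.2
              ⟨(Finset.mem_filter.1 hp).2 v (by rw [he'uv]; exact Sym2.mem_mk_right u v),
               (Finset.mem_filter.1 hm).2 v (by rw [he'uv]; exact Sym2.mem_mk_right u v)⟩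
            rw [hinter, Finset.mem_insert, Finset.mem_singleton] at hu hv
            rw [he'uv, heab]
            rcases hu with rfl | rfl <;> rcases hv with rfl | rfl
            · exact absurd rfl huv
            · rfl
            · exact Sym2.eq_swap
            · exact absurd rfl huv
          · rintro rfl; exact ⟨heEp, heEm⟩
        have hcardE : E.card + 1 = Ep.card + Em.card := by
          have := Finset.card_union_add_card_inter Ep Em
          rw [← hEunion, hEinter, Finset.card_singleton] at this
          omega
        -- apply induction hypothesis to both sides
        have hSpcard : Sp.card ≤ N := by
          have : Sp ⊂ S := (Finset.ssubset_iff_of_subset (Finset.filter_subset _ _)).2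
            ⟨y, hyS, hySp⟩
          have := Finset.card_lt_card this
          omega
        have hSmcard : Sm.card ≤ N := by
          have : Sm ⊂ S := (Finset.ssubset_iff_of_subset (Finset.filter_subset _ _)).2
            ⟨x, hxS, hxSm⟩
          have := Finset.card_lt_card this
          omega
        have hchordp : ∀ e' ∈ Ep, IsChord Sp e' := by
          intro e' he'
          obtain ⟨u, v, huS, hvS, huv, he'uv⟩ := hE e' (Finset.mem_filter.1 he').1
          exact ⟨u, v, (Finset.mem_filter.1 he').2 u (by rw [he'uv]; exact Sym2.mem_mk_left u v),
            (Finset.mem_filter.1 he').2 v (by rw [he'uv]; exact Sym2.mem_mk_right u v), huv, he'uv⟩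
        have hchordm : ∀ e' ∈ Em, IsChord Sm e' := by
          intro e' he'
          obtain ⟨u, v, huS, hvS, huv, he'uv⟩ := hE e' (Finset.mem_filter.1 he').1
          exact ⟨u, v, (Finset.mem_filter.1 he').2 u (by rw [he'uv]; exact Sym2.mem_mk_left u v),
            (Finset.mem_filter.1 he').2 v (by rw [he'uv]; exact Sym2.mem_mk_right u v), huv, he'uv⟩
        have hPp : (↑Ep : Set (Sym2 Pt)).Pairwise NCs :=
          hP.mono (Finset.coe_subset.2 (Finset.filter_subset _ _))
        have hPm : (↑Em : Set (Sym2 Pt)).Pairwise NCs :=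
          hP.mono (Finset.coe_subset.2 (Finset.filter_subset _ _))
        have hEp' := ih Sp hSpcard (hCI.mono (Finset.filter_subset _ _)) Ep hchordp hPp
        have hEm' := ih Sm hSmcard (hCI.mono (Finset.filter_subset _ _)) Em hchordm hPm
        have hSp3 : 3 ≤ Sp.card := by
          have hsub : ({a, b, x} : Finset Pt) ⊆ Sp := by
            intro w hw
            simp only [Finset.mem_insert, Finset.mem_singleton] at hw
            rcases hw with rfl | rfl | rfl; exacts [haSp, hbSp, hxSp]
          have hcard3 : ({a, b, x} : Finset Pt).card = 3 := by
            rw [Finset.card_insert_of_notMem, Finset.card_pair (Ne.symm hxb)]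
            simp only [Finset.mem_insert, Finset.mem_singleton]
            push_neg
            exact ⟨hab, Ne.symm hxa⟩
          have hle := Finset.card_le_card hsub
          omega
        have hSm3 : 3 ≤ Sm.card := by
          have hsub : ({a, b, y} : Finset Pt) ⊆ Sm := by
            intro w hw
            simp only [Finset.mem_insert, Finset.mem_singleton] at hw
            rcases hw with rfl | rfl | rfl; exacts [haSm, hbSm, hySm]
          have hcard3 : ({a, b, y} : Finset Pt).card = 3 := by
            rw [Finset.card_insert_of_notMem, Finset.card_pair (Ne.symm hyb)]
            simp only [Finset.mem_insert, Finset.mem_singleton]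
            push_neg
            exact ⟨hab, Ne.symm hya⟩
          have hle := Finset.card_le_card hsub
          omega
        omega

end Aux


namespace Aux

lemma fin_add_one_val {n : ℕ} [NeZero n] (j : Fin n) :
    (j + 1).val = if j.val + 1 = n then 0 else j.val + 1 := by
  cases n with
  | zero => exact absurd rfl (NeZero.ne 0)
  | succ m =>
    rw [Fin.val_add_one]
    rcases eq_or_ne j (Fin.last m) with rfl | h
    · simp [Fin.val_last]
    · have hval : j.val ≠ m := fun hc => h (Fin.ext hc)
      rw [if_neg h, if_neg (by omega)]

lemma fin_ne_add_one {n : ℕ} [NeZero n] (hn : 2 ≤ n) (i : Fin n) : i ≠ i + 1 := by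
  intro h
  have := congrArg Fin.val h
  rw [fin_add_one_val] at this
  have hi := i.isLt
  split_ifs at this <;> omega

end Aux

namespace Aux

lemma upper {n : ℕ} [NeZero n] (hn : 3 ≤ n) (p : Fin n → Pt) (hP : IsConvexPolygon p)
    (e : ℕ) (f : Fin (e + 1) → Fin n) (hf : IsPathEmbedding p f) : e ≤ n - 3 := by
  classical
  obtain ⟨⟨hn3, pinj, hsimple⟩, hconv⟩ := hP
  obtain ⟨finj, hnadj, hncr, hbd⟩ := hf
  set S : Finset Pt := Finset.univ.image p with hSdef
  have hScard : S.card = n := by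
    rw [hSdef, Finset.card_image_of_injective _ pinj, Finset.card_univ, Fintype.card_fin]
  have hCI : CI S := by
    intro x hx hmem
    obtain ⟨i, _, rfl⟩ := Finset.mem_image.1 hx
    have hsub : (↑(S.erase (p i)) : Set Pt) ⊆ p '' {j | j ≠ i} := by
      intro w hw
      simp only [Finset.coe_erase, Set.mem_diff, Set.mem_singleton_iff] at hw
      obtain ⟨j, _, rfl⟩ := Finset.mem_image.1 hw.1
      exact ⟨j, fun hj => hw.2 (by rw [hj]), rfl⟩
    have := hconv {j | j ≠ i} i (convexHull_mono hsub hmem)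
    exact this rfl
  -- the two families of chords
  set g : Fin e → Sym2 Pt := fun k => s(p (f k.castSucc), p (f k.succ)) with hgdef
  set h : Fin n → Sym2 Pt := fun i => s(p i, p (i + 1)) with hhdef
  have hpf : Function.Injective (p ∘ f) := pinj.comp finj
  have ginj : Function.Injective g := by
    intro k l hkl
    rw [hgdef] at hkl
    simp only [Sym2.eq_iff] at hkl
    rcases hkl with ⟨h1, h2⟩ | ⟨h1, h2⟩
    · have := finj (pinj h1)
      exact Fin.castSucc_injective _ this
    · have e1 := finj (pinj h1)
      have e2 := finj (pinj h2)
      have v1 := congrArg Fin.val e1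
      have v2 := congrArg Fin.val e2
      simp only [Fin.coe_castSucc, Fin.val_succ] at v1 v2
      exact Fin.ext (by omega)
  have hinj : Function.Injective h := by
    intro i j hij
    rw [hhdef] at hij
    simp only [Sym2.eq_iff] at hij
    rcases hij with ⟨h1, _⟩ | ⟨h1, h2⟩
    · exact pinj h1
    · have e1 := congrArg Fin.val (pinj h1)
      have e2 := congrArg Fin.val (pinj h2)
      rw [fin_add_one_val] at e1 e2
      have hi := i.isLt; have hj := j.isLt
      split_ifs at e1 e2 <;> (exact Fin.ext (by omega))
  have hdisj : Disjoint (Finset.univ.image g) (Finset.univ.image h) := by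
    rw [Finset.disjoint_left]
    intro c hc hc'
    obtain ⟨k, _, rfl⟩ := Finset.mem_image.1 hc
    obtain ⟨i, _, hgk⟩ := Finset.mem_image.1 hc'
    rw [hhdef, hgdef] at hgk
    simp only [Sym2.eq_iff] at hgk
    apply hnadj k
    rcases hgk with ⟨h1, h2⟩ | ⟨h1, h2⟩
    · left; rw [← pinj h2, ← pinj h1]
    · right; rw [← pinj h2, ← pinj h1]
  set E : Finset (Sym2 Pt) := Finset.univ.image g ∪ Finset.univ.image h with hEdef
  have hchord : ∀ c ∈ E, IsChord S c := by
    intro c hc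
    rcases Finset.mem_union.1 hc with hc | hc
    · obtain ⟨k, _, rfl⟩ := Finset.mem_image.1 hc
      refine ⟨p (f k.castSucc), p (f k.succ), Finset.mem_image_of_mem p (Finset.mem_univ _),
        Finset.mem_image_of_mem p (Finset.mem_univ _), ?_, rfl⟩
      intro hcon
      have := finj (pinj hcon)
      exact absurd (congrArg Fin.val this) (by simp)
    · obtain ⟨i, _, rfl⟩ := Finset.mem_image.1 hc
      refine ⟨p i, p (i + 1), Finset.mem_image_of_mem p (Finset.mem_univ _),
        Finset.mem_image_of_mem p (Finset.mem_univ _), ?_, rfl⟩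
      intro hcon
      exact fin_ne_add_one (by omega) i (pinj hcon)
  have hpw : (↑E : Set (Sym2 Pt)).Pairwise NCs := by
    intro c1 hc1 c2 hc2 hne
    rw [Finset.mem_coe, hEdef, Finset.mem_union] at hc1 hc2
    rcases hc1 with hc1 | hc1 <;> rcases hc2 with hc2 | hc2 <;>
      [obtain ⟨k, _, rfl⟩ := Finset.mem_image.1 hc1; obtain ⟨k, _, rfl⟩ := Finset.mem_image.1 hc1;
       obtain ⟨i, _, rfl⟩ := Finset.mem_image.1 hc1; obtain ⟨i, _, rfl⟩ := Finset.mem_image.1 hc1]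
    · obtain ⟨l, _, rfl⟩ := Finset.mem_image.1 hc2
      have hkl : k ≠ l := fun hc => hne (by rw [hc])
      exact ncs_of (hncr k l hkl)
    · obtain ⟨i, _, rfl⟩ := Finset.mem_image.1 hc2
      exact ncs_of (hbd k i)
    · obtain ⟨k, _, rfl⟩ := Finset.mem_image.1 hc2
      exact ncs_symm (ncs_of (hbd k i))
    · obtain ⟨j, _, rfl⟩ := Finset.mem_image.1 hc2
      have hij : i ≠ j := fun hc => hne (by rw [hc])
      exact ncs_of (hsimple i j hij)
  have hEcard : E.card = e + n := by
    rw [hEdef, Finset.card_union_of_disjoint hdisj,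
      Finset.card_image_of_injective _ ginj, Finset.card_image_of_injective _ hinj,
      Finset.card_univ, Finset.card_univ, Fintype.card_fin, Fintype.card_fin]
  have := chord_bound S.card S le_rfl hCI E hchord hpw
  rw [hEcard, hScard] at this
  omega

end Aux

namespace Aux

lemma sign_trans {A B C : ℝ} (h1 : 0 < A * B) (h2 : 0 < B * C) : 0 < A * C := by
  rcases mul_pos_iff.1 h1 with ⟨hA, hB⟩ | ⟨hA, hB⟩ <;>
    rcases mul_pos_iff.1 h2 with ⟨hB', hC⟩ | ⟨hB', hC⟩ <;>
    first
      | exact mul_pos hA hC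
      | exact mul_pos_of_neg_of_neg hA hC
      | linarith

set_option linter.unusedSectionVars false

section Geo

open Fin.NatCast Fin.CommRing

variable {n : ℕ} [NeZero n] {p : Fin n → Pt}

/-- distinct vertices are never collinear -/
lemma cr_ne (pinj : Function.Injective p) (hCI : CI (Finset.univ.image p))
    {i j k : Fin n} (hij : i ≠ j) (hik : i ≠ k) (hjk : j ≠ k) :
    cross2 (p i) (p j) (p k) ≠ 0 :=
  hCI.cross2_ne (Finset.mem_image_of_mem p (Finset.mem_univ i))
    (Finset.mem_image_of_mem p (Finset.mem_univ j))
    (Finset.mem_image_of_mem p (Finset.mem_univ k))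
    (fun h => hij (pinj h)) (fun h => hik (pinj h)) (fun h => hjk (pinj h))

lemma same_side_p (pinj : Function.Injective p) (hCI : CI (Finset.univ.image p))
    {i j k l : Fin n} (hij : i ≠ j) (hik : i ≠ k) (hil : i ≠ l) (hjk : j ≠ k)
    (hjl : j ≠ l) (hkl : k ≠ l)
    (hnc : seg (p i) (p j) ∩ seg (p k) (p l) ⊆ ({p i, p j} ∩ {p k, p l} : Set Pt)) :
    0 < cross2 (p i) (p j) (p k) * cross2 (p i) (p j) (p l) :=
  same_side hCI (Finset.mem_image_of_mem p (Finset.mem_univ i))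
    (Finset.mem_image_of_mem p (Finset.mem_univ j))
    (Finset.mem_image_of_mem p (Finset.mem_univ k))
    (Finset.mem_image_of_mem p (Finset.mem_univ l))
    (fun h => hij (pinj h)) (fun h => hik (pinj h)) (fun h => hil (pinj h))
    (fun h => hjk (pinj h)) (fun h => hjl (pinj h)) (fun h => hkl (pinj h)) hnc

/-- sign of `cross2 (p a) (p b)` is constant along a walk avoiding `a, b` -/
lemma walk_sign (hn : 3 ≤ n) (pinj : Function.Injective p) (hCI : CI (Finset.univ.image p))
    (a b c : Fin n) (hab : a ≠ b)
    (hNC : ∀ m : Fin n, m ≠ a → m ≠ b → (m + 1) ≠ a → (m + 1) ≠ b →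
      seg (p a) (p b) ∩ seg (p m) (p (m + 1)) ⊆ ({p a, p b} ∩ {p m, p (m + 1)} : Set Pt)) :
    ∀ t : ℕ, (∀ s : ℕ, s ≤ t → (c + (s : Fin n) ≠ a ∧ c + (s : Fin n) ≠ b)) →
    0 < cross2 (p a) (p b) (p c) * cross2 (p a) (p b) (p (c + (t : Fin n))) := by
  intro t
  induction t with
  | zero =>
    intro hs
    obtain ⟨hca, hcb⟩ := hs 0 le_rfl
    simp only [Nat.cast_zero, add_zero] at hca hcb ⊢
    have := cr_ne pinj hCI hab (Ne.symm hca) (Ne.symm hcb)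
    exact mul_self_pos.2 this
  | succ t ih =>
    intro hs
    have ih' := ih (fun s hst => hs s (Nat.le_succ_of_le hst))
    set m : Fin n := c + (t : Fin n) with hm
    have hms : c + ((t + 1 : ℕ) : Fin n) = m + 1 := by
      rw [hm]; push_cast; ring
    obtain ⟨hma, hmb⟩ := hs t (Nat.le_succ t)
    obtain ⟨hm1a, hm1b⟩ := hs (t + 1) le_rfl
    rw [hms] at hm1a hm1b ⊢
    have hmm1 : m ≠ m + 1 := fin_ne_add_one (by omega) m
    have hstep : 0 < cross2 (p a) (p b) (p m) * cross2 (p a) (p b) (p (m + 1)) :=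
      same_side_p pinj hCI hab (Ne.symm hma) (Ne.symm hm1a) (Ne.symm hmb) (Ne.symm hm1b)
        hmm1 (hNC m hma hmb hm1a hm1b)
    have h1 : 0 < cross2 (p a) (p b) (p c) * cross2 (p a) (p b) (p m) := ih'
    exact sign_trans h1 hstep

lemma val_cast_lt (u : ℕ) (hu : u < n) : ((u : Fin n)).val = u := by
  rw [Fin.val_natCast]; exact Nat.mod_eq_of_lt hu

lemma add_cast_ne (b : Fin n) {u : ℕ} (h1 : 1 ≤ u) (hu : u < n) : b + (u : Fin n) ≠ b := by
  intro h
  have h0 : (u : Fin n) = 0 := by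
    have := congrArg (fun x => x - b) h
    simpa [add_comm, add_sub_cancel_right] using this
  have := congrArg Fin.val h0
  rw [val_cast_lt u hu] at this
  simp at this
  omega

lemma conv_order (hn : 3 ≤ n) (pinj : Function.Injective p) (hCI : CI (Finset.univ.image p))
    (hsimple : ∀ i j : Fin n, i ≠ j →
      edgeSeg p i ∩ edgeSeg p j ⊆ ({p i, p (i + 1)} ∩ {p j, p (j + 1)} : Set Pt))
    (i : Fin n) {j k : Fin n} (hji : j ≠ i) (hji1 : j ≠ i + 1) (hki : k ≠ i) (hki1 : k ≠ i + 1) :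
    0 < cross2 (p i) (p (i + 1)) (p j) * cross2 (p i) (p (i + 1)) (p k) := by
  set b : Fin n := i + 1 with hb
  have hab : i ≠ b := fin_ne_add_one (by omega) i
  have hNC : ∀ m : Fin n, m ≠ i → m ≠ b → (m + 1) ≠ i → (m + 1) ≠ b →
      seg (p i) (p b) ∩ seg (p m) (p (m + 1)) ⊆ ({p i, p b} ∩ {p m, p (m + 1)} : Set Pt) :=
    fun m hmi _ _ _ => hsimple i m (Ne.symm hmi)
  -- vertices on the walk avoid i and i+1
  have havoid : ∀ u : ℕ, 1 ≤ u → u ≤ n - 2 → (b + (u : Fin n) ≠ i ∧ b + (u : Fin n) ≠ b) := by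
    intro u h1 h2
    constructor
    · intro h
      apply add_cast_ne i (u := 1 + u) (by omega) (by omega)
      calc i + ((1 + u : ℕ) : Fin n) = i + 1 + (u : Fin n) := by push_cast; ring
        _ = i := h
    · exact add_cast_ne b h1 (by omega)
  -- every vertex other than i, i+1 is b + u for some u in [1, n-2]
  have hrepr : ∀ l : Fin n, l ≠ i → l ≠ b → ∃ u : ℕ, 1 ≤ u ∧ u ≤ n - 2 ∧ l = b + (u : Fin n) := by
    intro l hli hlb
    refine ⟨(l - b).val, ?_, ?_, ?_⟩
    · rcases Nat.eq_zero_or_pos (l - b).val with h0 | h1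
      · exfalso
        have : l - b = 0 := Fin.ext (by simp [h0])
        exact hlb (by rwa [sub_eq_zero] at this)
      · exact h1
    · have hlt := (l - b).isLt
      rcases Nat.lt_or_ge (l - b).val (n - 1) with h | h
      · omega
      · exfalso
        have hv : (l - b).val = n - 1 := by omega
        have : l = i := by
          have h1 : l - b = ((n - 1 : ℕ) : Fin n) := Fin.ext (by rw [hv, val_cast_lt _ (by omega)])
          have h2 : l = b + ((n - 1 : ℕ) : Fin n) := by rw [← h1]; ring
          rw [h2, hb]
          have : (1 : Fin n) + ((n - 1 : ℕ) : Fin n) = 0 := by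
            have : ((1 + (n - 1) : ℕ) : Fin n) = ((n : ℕ) : Fin n) := by congr 1; omega
            push_cast at this
            rw [this]
            exact Fin.natCast_self n
          rw [add_assoc, this, add_zero]
        exact hli this
    · rw [Fin.cast_val_eq_self]; ring
  have hwalk : ∀ l : Fin n, l ≠ i → l ≠ b →
      0 < cross2 (p i) (p b) (p (b + (1 : Fin n))) * cross2 (p i) (p b) (p l) := by
    intro l hli hlb
    obtain ⟨u, hu1, hu2, rfl⟩ := hrepr l hli hlb
    have := walk_sign hn pinj hCI i b (b + (1 : Fin n)) hab hNC (u - 1) ?_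
    · have harr : b + (1 : Fin n) + ((u - 1 : ℕ) : Fin n) = b + (u : Fin n) := by
        push_cast [Nat.cast_sub hu1]
        ring
      rwa [harr] at this
    · intro s hs
      have harr : b + (1 : Fin n) + (s : Fin n) = b + ((1 + s : ℕ) : Fin n) := by
        push_cast; ring
      rw [harr]
      exact havoid (1 + s) (by omega) (by omega)
  have hj := hwalk j hji hji1
  have hk := hwalk k hki hki1
  exact sign_trans (mul_comm (cross2 (p i) (p b) (p (b + 1))) (cross2 (p i) (p b) (p j)) ▸ hj) hk

lemma chord_edge (hn : 3 ≤ n) (pinj : Function.Injective p) (hCI : CI (Finset.univ.image p))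
    (hsimple : ∀ i j : Fin n, i ≠ j →
      edgeSeg p i ∩ edgeSeg p j ⊆ ({p i, p (i + 1)} ∩ {p j, p (j + 1)} : Set Pt))
    (a b : Fin n) (hab : a ≠ b) (hnadj : ¬ adjV a b) (m : Fin n) :
    seg (p a) (p b) ∩ edgeSeg p m ⊆ ({p a, p b} ∩ {p m, p (m + 1)} : Set Pt) := by
  have hm1 : m ≠ m + 1 := fin_ne_add_one (by omega) m
  rintro z ⟨hz1, hz2⟩
  have hz2' : z ∈ seg (p m) (p (m + 1)) := hz2
  obtain ⟨t, ht0, ht1, hzt⟩ := mem_seg_iff.1 hz1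
  obtain ⟨r, hr0, hr1, hzr⟩ := mem_seg_iff.1 hz2'
  have hzc : cross2 (p m) (p (m + 1)) z = 0 := by
    rw [hzr, cross2_affine, cross2_self_mid, cross2_self_right]; ring
  have hzc1 : cross2 (p m) (p (m + 1)) z =
      cross2 (p m) (p (m + 1)) (p a) +
        t * (cross2 (p m) (p (m + 1)) (p b) - cross2 (p m) (p (m + 1)) (p a)) := by
    rw [hzt, cross2_affine]
  by_cases ham : a = m
  · have hbm1 : b ≠ m + 1 := fun h => hnadj (Or.inl (by rw [h, ham]))
    have hbm : b ≠ m := fun h => hab (ham.trans h.symm)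
    have hca : cross2 (p m) (p (m + 1)) (p a) = 0 := by rw [ham, cross2_self_mid]
    have hcb : cross2 (p m) (p (m + 1)) (p b) ≠ 0 :=
      cr_ne pinj hCI hm1 (Ne.symm hbm) (Ne.symm hbm1)
    have ht : t = 0 := by
      rw [hzc1, hca] at hzc
      rcases mul_eq_zero.1 (by linarith : t * (cross2 (p m) (p (m + 1)) (p b) - 0) = 0) with h | h
      · exact h
      · exact absurd (by linarith : cross2 (p m) (p (m + 1)) (p b) = 0) hcb
    have hza : z = p a := by rw [hzt, ht]; simp
    exact ⟨Or.inl hza, Or.inl (by rw [hza, ham])⟩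
  · by_cases ham1 : a = m + 1
    · have hbm : b ≠ m := fun h => hnadj (Or.inr (by rw [h, ham1]))
      have hbm1 : b ≠ m + 1 := fun h => hab (ham1.trans h.symm)
      have hca : cross2 (p m) (p (m + 1)) (p a) = 0 := by rw [ham1, cross2_self_right]
      have hcb : cross2 (p m) (p (m + 1)) (p b) ≠ 0 :=
        cr_ne pinj hCI hm1 (Ne.symm hbm) (Ne.symm hbm1)
      have ht : t = 0 := by
        rw [hzc1, hca] at hzc
        rcases mul_eq_zero.1 (by linarith : t * (cross2 (p m) (p (m + 1)) (p b) - 0) = 0) with h | h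
        · exact h
        · exact absurd (by linarith : cross2 (p m) (p (m + 1)) (p b) = 0) hcb
      have hza : z = p a := by rw [hzt, ht]; simp
      exact ⟨Or.inl hza, Or.inr (by rw [hza, ham1]; exact rfl)⟩
    · by_cases hbm : b = m
      · have ham' : a ≠ m + 1 := ham1
        have hcb : cross2 (p m) (p (m + 1)) (p b) = 0 := by rw [hbm, cross2_self_mid]
        have hca : cross2 (p m) (p (m + 1)) (p a) ≠ 0 :=
          cr_ne pinj hCI hm1 (Ne.symm ham) (Ne.symm ham1)
        have ht : t = 1 := by
          rw [hzc1, hcb] at hzc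
          have : (1 - t) * cross2 (p m) (p (m + 1)) (p a) = 0 := by linarith
          rcases mul_eq_zero.1 this with h | h
          · linarith
          · exact absurd h hca
        have hzb : z = p b := by rw [hzt, ht]; module
        exact ⟨Or.inr hzb, Or.inl (by rw [hzb, hbm])⟩
      · by_cases hbm1 : b = m + 1
        · have hcb : cross2 (p m) (p (m + 1)) (p b) = 0 := by rw [hbm1, cross2_self_right]
          have hca : cross2 (p m) (p (m + 1)) (p a) ≠ 0 :=
            cr_ne pinj hCI hm1 (Ne.symm ham) (Ne.symm ham1)
          have ht : t = 1 := by
            rw [hzc1, hcb] at hzc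
            have : (1 - t) * cross2 (p m) (p (m + 1)) (p a) = 0 := by linarith
            rcases mul_eq_zero.1 this with h | h
            · linarith
            · exact absurd h hca
          have hzb : z = p b := by rw [hzt, ht]; module
          exact ⟨Or.inr hzb, Or.inr (by rw [hzb, hbm1]; exact rfl)⟩
        · exfalso
          have hprod := conv_order hn pinj hCI hsimple m ham ham1 hbm hbm1
          rw [hzc1] at hzc
          rcases mul_pos_iff.1 hprod with ⟨h1, h2⟩ | ⟨h1, h2⟩
          · rcases eq_or_lt_of_le ht1 with ht' | ht'
            · rw [ht'] at hzc; linarith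
            · nlinarith [mul_pos (sub_pos.2 ht') h1, mul_nonneg ht0 h2.le]
          · rcases eq_or_lt_of_le ht1 with ht' | ht'
            · rw [ht'] at hzc; linarith
            · nlinarith [mul_neg_of_pos_of_neg (sub_pos.2 ht') h1,
                mul_nonpos_of_nonneg_of_nonpos ht0 h2.le]

lemma convex_comb_sign {A B : ℝ} (h : 0 < A * B) {r : ℝ} (hr0 : 0 ≤ r) (hr1 : r ≤ 1) :
    A + r * (B - A) ≠ 0 := by
  intro hzc
  rcases mul_pos_iff.1 h with ⟨h1, h2⟩ | ⟨h1, h2⟩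
  · rcases eq_or_lt_of_le hr1 with hr' | hr'
    · rw [hr'] at hzc; linarith
    · nlinarith [mul_pos (sub_pos.2 hr') h1, mul_nonneg hr0 h2.le]
  · rcases eq_or_lt_of_le hr1 with hr' | hr'
    · rw [hr'] at hzc; linarith
    · nlinarith [mul_neg_of_pos_of_neg (sub_pos.2 hr') h1,
        mul_nonpos_of_nonneg_of_nonpos hr0 h2.le]

lemma arc_prod (hn : 3 ≤ n) (pinj : Function.Injective p) (hCI : CI (Finset.univ.image p))
    (hsimple : ∀ i j : Fin n, i ≠ j →
      edgeSeg p i ∩ edgeSeg p j ⊆ ({p i, p (i + 1)} ∩ {p j, p (j + 1)} : Set Pt))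
    (a b : Fin n) (hab : a ≠ b) (hnadj : ¬ adjV a b) (s t : ℕ)
    (hs : 1 ≤ s) (hst : s ≤ t) (ht : t ≤ (b - a).val - 1) :
    0 < cross2 (p a) (p b) (p (a + (s : Fin n))) * cross2 (p a) (p b) (p (a + (t : Fin n))) := by
  set k := (b - a).val with hk
  have hkn : k < n := (b - a).isLt
  have hk1 : 1 ≤ k := by
    rcases Nat.eq_zero_or_pos k with h0 | h1
    · exfalso
      have : b - a = 0 := by apply Fin.ext; simpa [← hk] using h0
      exact hab (sub_eq_zero.1 this).symm
    · exact h1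
  have hb' : b = a + ((k : ℕ) : Fin n) := by
    rw [hk, Fin.cast_val_eq_self]; ring
  have havoid : ∀ w : ℕ, 1 ≤ w → w ≤ k - 1 → a + (w : Fin n) ≠ a ∧ a + (w : Fin n) ≠ b := by
    intro w h1 h2
    refine ⟨add_cast_ne a h1 (by omega), ?_⟩
    intro hcon
    rw [hb'] at hcon
    have := add_left_cancel hcon
    have hv := congrArg Fin.val this
    rw [val_cast_lt w (by omega), val_cast_lt k (by omega)] at hv
    omega
  have hNC : ∀ m : Fin n, m ≠ a → m ≠ b → (m + 1) ≠ a → (m + 1) ≠ b →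
      seg (p a) (p b) ∩ seg (p m) (p (m + 1)) ⊆ ({p a, p b} ∩ {p m, p (m + 1)} : Set Pt) :=
    fun m _ _ _ _ => chord_edge hn pinj hCI hsimple a b hab hnadj m
  have := walk_sign hn pinj hCI a b (a + (s : Fin n)) hab hNC (t - s) ?_
  · have harr : a + (s : Fin n) + ((t - s : ℕ) : Fin n) = a + (t : Fin n) := by
      push_cast [Nat.cast_sub hst]
      ring
    rwa [harr] at this
  · intro u hu
    have harr : a + (s : Fin n) + (u : Fin n) = a + ((s + u : ℕ) : Fin n) := by
      push_cast; ring
    rw [harr]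
    exact havoid (s + u) (by omega) (by omega)

lemma nested_nc (hn : 3 ≤ n) (pinj : Function.Injective p) (hCI : CI (Finset.univ.image p))
    (hsimple : ∀ i j : Fin n, i ≠ j →
      edgeSeg p i ∩ edgeSeg p j ⊆ ({p i, p (i + 1)} ∩ {p j, p (j + 1)} : Set Pt))
    (a b c d : Fin n) (hab : a ≠ b) (hnadj : ¬ adjV a b) (s t : ℕ)
    (hs : 1 ≤ s) (hst : s ≤ t) (ht : t ≤ (b - a).val - 1)
    (hc : c = a + (s : Fin n)) (hd : d = a + (t : Fin n)) :
    seg (p a) (p b) ∩ seg (p c) (p d) = ∅ := by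
  have hprod := arc_prod hn pinj hCI hsimple a b hab hnadj s t hs hst ht
  rw [← hc, ← hd] at hprod
  ext z
  simp only [Set.mem_inter_iff, Set.mem_empty_iff_false, iff_false, not_and]
  intro hz1 hz2
  obtain ⟨r, hr0, hr1, hzr⟩ := mem_seg_iff.1 hz2
  have hz0 : cross2 (p a) (p b) z = 0 := by
    obtain ⟨t', _, _, hzt⟩ := mem_seg_iff.1 hz1
    rw [hzt, cross2_affine, cross2_self_mid, cross2_self_right]; ring
  have : cross2 (p a) (p b) z ≠ 0 := by
    rw [hzr, cross2_affine]
    exact convex_comb_sign hprod hr0 hr1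
  exact this hz0

lemma shared_nc (pinj : Function.Injective p) (hCI : CI (Finset.univ.image p))
    (a b d : Fin n) (hab : a ≠ b) (had : a ≠ d) (hbd : b ≠ d) :
    seg (p a) (p b) ∩ seg (p a) (p d) ⊆ ({p a} : Set Pt) := by
  have hcr : cross2 (p a) (p b) (p d) ≠ 0 :=
    cr_ne pinj hCI hab had hbd
  rintro z ⟨hz1, hz2⟩
  obtain ⟨s, hs0, hs1, hzs⟩ := mem_seg_iff.1 hz1
  obtain ⟨t, ht0, ht1, hzt⟩ := mem_seg_iff.1 hz2
  have heq : s • (p b - p a) = t • (p d - p a) := by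
    have := hzs.symm.trans hzt
    exact add_left_cancel this
  have h1 : s * ((p b).1 - (p a).1) = t * ((p d).1 - (p a).1) := by
    have := congrArg Prod.fst heq
    simpa using this
  have h2 : s * ((p b).2 - (p a).2) = t * ((p d).2 - (p a).2) := by
    have := congrArg Prod.snd heq
    simpa using this
  have hs : s * cross2 (p a) (p b) (p d) = 0 := by
    simp only [cross2]
    linear_combination ((p d).2 - (p a).2) * h1 - ((p d).1 - (p a).1) * h2
  rcases mul_eq_zero.1 hs with h | h
  · rw [hzs, h]
    simp
  · exact absurd h hcr

end Geo

end Aux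

namespace Aux

/-- the zig-zag vertex sequence, as natural numbers -/
def zigN (n k : ℕ) : ℕ := if k % 2 = 0 then k / 2 + 1 else n - 1 - k / 2

/-- low endpoint of zig-zag edge `k` -/
def eL (k : ℕ) : ℕ := (k + 1) / 2 + 1
/-- high endpoint of zig-zag edge `k` -/
def eH (n k : ℕ) : ℕ := n - 1 - k / 2

lemma zig_lt {n k : ℕ} (hn : 3 ≤ n) (hk : k ≤ n - 3) : zigN n k < n := by
  unfold zigN; split_ifs <;> omega

lemma zig_inj {n k l : ℕ} (hn : 3 ≤ n) (hk : k ≤ n - 3) (hl : l ≤ n - 3) (hkl : k ≠ l) :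
    zigN n k ≠ zigN n l := by
  unfold zigN; split_ifs <;> omega

lemma zig_edge {n k : ℕ} (hn : 3 ≤ n) (hk : k < n - 3) :
    (zigN n k = eL k ∧ zigN n (k + 1) = eH n k) ∨
    (zigN n k = eH n k ∧ zigN n (k + 1) = eL k) := by
  unfold zigN eL eH
  rcases Nat.even_or_odd k with he | ho
  · left
    have h2 : k % 2 = 0 := Nat.even_iff.1 he
    constructor <;> [skip; skip] <;> split_ifs <;> omega
  · right
    have h2 : k % 2 = 1 := Nat.odd_iff.1 ho
    constructor <;> [skip; skip] <;> split_ifs <;> omega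

lemma eL_one {k : ℕ} : 1 ≤ eL k := by unfold eL; omega
lemma eL_lt_eH {n k : ℕ} (hn : 3 ≤ n) (hk : k < n - 3) : eL k + 2 ≤ eH n k := by
  unfold eL eH; omega
lemma eH_le {n k : ℕ} (hn : 3 ≤ n) : eH n k ≤ n - 1 := by unfold eH; omega
lemma eL_eH_diff {n k : ℕ} (hn : 3 ≤ n) (hk : k < n - 3) : eL k + (n - 2 - k) = eH n k := by
  unfold eL eH; omega
lemma eL_mono {k l : ℕ} (h : k + 2 ≤ l) : eL k + 1 ≤ eL l := by unfold eL; omega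
lemma eH_mono {n k l : ℕ} (h : k + 2 ≤ l) (hl : l < n - 3) (hn : 3 ≤ n) :
    eH n l + 1 ≤ eH n k := by unfold eH; omega

section Zig

open Fin.NatCast Fin.CommRing

variable {n : ℕ} [NeZero n] {p : Fin n → Pt}

lemma adjV_symm {i j : Fin n} (h : adjV i j) : adjV j i := h.symm

lemma nc_swap {a b c d : Pt} (h : seg a b ∩ seg c d ⊆ ({a, b} ∩ {c, d} : Set Pt)) :
    seg c d ∩ seg a b ⊆ ({c, d} ∩ {a, b} : Set Pt) := by
  rw [Set.inter_comm, Set.inter_comm ({c, d} : Set Pt)]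
  exact h

/-- the `Fin n` endpoints of zig-zag edge `k` -/
lemma zig_fin_facts (hn : 3 ≤ n) {k : ℕ} (hk : k < n - 3) :
    ((eH n k : Fin n) - (eL k : Fin n)).val = n - 2 - k ∧
    ¬ adjV ((eL k : ℕ) : Fin n) ((eH n k : ℕ) : Fin n) ∧
    ((eL k : ℕ) : Fin n) ≠ ((eH n k : ℕ) : Fin n) := by
  have h1 := eL_one (k := k)
  have h2 := eL_lt_eH hn hk
  have h3 := eH_le (n := n) (k := k) hn
  have h4 := eL_eH_diff hn hk
  have hvL : ((eL k : ℕ) : Fin n).val = eL k := val_cast_lt _ (by omega)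
  have hvH : ((eH n k : ℕ) : Fin n).val = eH n k := val_cast_lt _ (by omega)
  have hsum : ((eH n k : ℕ) : Fin n) = ((eL k : ℕ) : Fin n) + ((n - 2 - k : ℕ) : Fin n) := by
    rw [← Nat.cast_add, ← h4]
  have hsub : ((eH n k : Fin n) - (eL k : Fin n)) = ((n - 2 - k : ℕ) : Fin n) := by
    rw [hsum]; ring
  refine ⟨by rw [hsub]; exact val_cast_lt _ (by omega), ?_, ?_⟩
  · rintro (h | h)
    · have hv := congrArg Fin.val h
      rw [hvH, fin_add_one_val, hvL] at hv
      split_ifs at hv <;> omega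
    · have hv := congrArg Fin.val h
      rw [hvL, fin_add_one_val, hvH] at hv
      split_ifs at hv <;> omega
  · intro h
    have hv := congrArg Fin.val h
    rw [hvL, hvH] at hv
    omega

lemma zf_ne (hn : 3 ≤ n) {k l : ℕ} (hk : k ≤ n - 3) (hl : l ≤ n - 3) (hkl : k ≠ l) :
    ((zigN n k : ℕ) : Fin n) ≠ ((zigN n l : ℕ) : Fin n) := by
  intro h
  have hv := congrArg Fin.val h
  rw [val_cast_lt _ (zig_lt hn hk), val_cast_lt _ (zig_lt hn hl)] at hv
  exact zig_inj hn hk hl hkl hv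

lemma zig_nc_lt (hn : 3 ≤ n) (pinj : Function.Injective p) (hCI : CI (Finset.univ.image p))
    (hsimple : ∀ i j : Fin n, i ≠ j →
      edgeSeg p i ∩ edgeSeg p j ⊆ ({p i, p (i + 1)} ∩ {p j, p (j + 1)} : Set Pt))
    {k l : ℕ} (hk : k < n - 3) (hl : l < n - 3) (hkl : k < l) :
    seg (p ((zigN n k : ℕ) : Fin n)) (p ((zigN n (k + 1) : ℕ) : Fin n)) ∩
      seg (p ((zigN n l : ℕ) : Fin n)) (p ((zigN n (l + 1) : ℕ) : Fin n)) ⊆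
    (({p ((zigN n k : ℕ) : Fin n), p ((zigN n (k + 1) : ℕ) : Fin n)} : Set Pt) ∩
      {p ((zigN n l : ℕ) : Fin n), p ((zigN n (l + 1) : ℕ) : Fin n)}) := by
  rcases Nat.lt_or_ge l (k + 2) with hadj | hnest
  · -- l = k + 1 : shared endpoint
    have hlk : l = k + 1 := by omega
    subst hlk
    have hne01 : ((zigN n k : ℕ) : Fin n) ≠ ((zigN n (k + 1) : ℕ) : Fin n) :=
      zf_ne hn (by omega) (by omega) (by omega)
    have hne12 : ((zigN n (k + 1) : ℕ) : Fin n) ≠ ((zigN n (k + 2) : ℕ) : Fin n) :=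
      zf_ne hn (by omega) (by omega) (by omega)
    have hne02 : ((zigN n k : ℕ) : Fin n) ≠ ((zigN n (k + 2) : ℕ) : Fin n) :=
      zf_ne hn (by omega) (by omega) (by omega)
    intro z hz
    have h1 : z ∈ seg (p ((zigN n (k + 1) : ℕ) : Fin n)) (p ((zigN n k : ℕ) : Fin n)) := by
      rw [seg_symm]; exact hz.1
    have h2 : z ∈ seg (p ((zigN n (k + 1) : ℕ) : Fin n)) (p ((zigN n (k + 1 + 1) : ℕ) : Fin n)) :=
      hz.2
    have hmem := shared_nc pinj hCI _ _ _ (Ne.symm hne01)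
      (show ((zigN n (k + 1) : ℕ) : Fin n) ≠ ((zigN n (k + 1 + 1) : ℕ) : Fin n) by
        have : k + 1 + 1 = k + 2 := rfl
        rw [this]; exact hne12) ?_ ⟨h1, h2⟩
    · have hzeq : z = p ((zigN n (k + 1) : ℕ) : Fin n) := hmem
      exact ⟨Or.inr hzeq, Or.inl hzeq⟩
    · -- zigN k ≠ zigN (k+2)
      have : k + 1 + 1 = k + 2 := rfl
      rw [this]; exact hne02
  · -- nested
    set A : Fin n := ((eL k : ℕ) : Fin n) with hA
    set B : Fin n := ((eH n k : ℕ) : Fin n) with hB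
    obtain ⟨hBA, hadjAB, hABne⟩ := zig_fin_facts (n := n) hn hk
    have h1 := eL_one (k := k)
    have h2 := eL_lt_eH hn hk
    have h3 := eH_le (n := n) (k := k) hn
    have h4 := eL_eH_diff hn hk
    have h1' := eL_one (k := l)
    have h2' := eL_lt_eH hn hl
    have h4' := eL_eH_diff hn hl
    have hmL := eL_mono (k := k) (l := l) hnest
    have hmH := eH_mono (n := n) hnest hl hn
    set s : ℕ := eL l - eL k with hs
    set t : ℕ := eH n l - eL k with ht
    have hC : ((eL l : ℕ) : Fin n) = A + ((s : ℕ) : Fin n) := by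
      rw [hA, ← Nat.cast_add]
      congr 1
      omega
    have hD : ((eH n l : ℕ) : Fin n) = A + ((t : ℕ) : Fin n) := by
      rw [hA, ← Nat.cast_add]
      congr 1
      omega
    have hempty := nested_nc hn pinj hCI hsimple A B ((eL l : ℕ) : Fin n) ((eH n l : ℕ) : Fin n)
      hABne hadjAB s t (by omega) (by omega) (by rw [hBA]; omega) hC hD
    -- identify the edges with (A,B) and (C,D) up to orientation
    have hsegk : seg (p ((zigN n k : ℕ) : Fin n)) (p ((zigN n (k + 1) : ℕ) : Fin n)) =
        seg (p A) (p B) := by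
      rcases zig_edge hn hk with ⟨hk1, hk2⟩ | ⟨hk1, hk2⟩
      · rw [hk1, hk2]
      · rw [hk1, hk2, seg_symm]
    have hsegl : seg (p ((zigN n l : ℕ) : Fin n)) (p ((zigN n (l + 1) : ℕ) : Fin n)) =
        seg (p ((eL l : ℕ) : Fin n)) (p ((eH n l : ℕ) : Fin n)) := by
      rcases zig_edge hn hl with ⟨hl1, hl2⟩ | ⟨hl1, hl2⟩
      · rw [hl1, hl2]
      · rw [hl1, hl2, seg_symm]
    rw [hsegk, hsegl, hempty]
    exact Set.empty_subset _

end Zig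

end Aux

namespace Aux

open Fin.NatCast Fin.CommRing

lemma ci_image {n : ℕ} [NeZero n] {p : Fin n → Pt} (pinj : Function.Injective p)
    (hconv : ConvexIndependent ℝ p) : CI (Finset.univ.image p) := by
  intro x hx hmem
  obtain ⟨i, _, rfl⟩ := Finset.mem_image.1 hx
  have hsub : (↑((Finset.univ.image p).erase (p i)) : Set Pt) ⊆ p '' {j | j ≠ i} := by
    intro w hw
    simp only [Finset.coe_erase, Set.mem_diff, Set.mem_singleton_iff] at hw
    obtain ⟨j, _, rfl⟩ := Finset.mem_image.1 hw.1
    exact ⟨j, fun hj => hw.2 (by rw [hj]), rfl⟩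
  exact hconv {j | j ≠ i} i (convexHull_mono hsub hmem) rfl

lemma construction {n : ℕ} [NeZero n] (hn : 3 ≤ n) (p : Fin n → Pt)
    (hP : IsConvexPolygon p) : ∃ f : Fin ((n - 3) + 1) → Fin n, IsPathEmbedding p f := by
  classical
  obtain ⟨⟨hn3, pinj, hsimple⟩, hconv⟩ := hP
  have hCI : CI (Finset.univ.image p) := ci_image pinj hconv
  refine ⟨fun k => ((zigN n k.val : ℕ) : Fin n), ?_, ?_, ?_, ?_⟩
  · -- injectivity
    intro k l h
    by_contra hne
    have hk := k.isLt
    have hl := l.isLt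
    exact zf_ne hn (by omega) (by omega) (fun hc => hne (Fin.ext hc)) h
  · -- non-adjacency
    intro k
    have hk := k.isLt
    show ¬ adjV ((zigN n k.val : ℕ) : Fin n) ((zigN n (k.val + 1) : ℕ) : Fin n)
    obtain ⟨_, hadjAB, _⟩ := zig_fin_facts (n := n) hn hk
    rcases zig_edge (n := n) hn hk with ⟨h1, h2⟩ | ⟨h1, h2⟩
    · rw [h1, h2]; exact hadjAB
    · rw [h1, h2]; exact fun h => hadjAB (adjV_symm h)
  · -- pairwise non-crossing
    intro k l hkl
    have hk := k.isLt
    have hl := l.isLt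
    show seg (p ((zigN n k.val : ℕ) : Fin n)) (p ((zigN n (k.val + 1) : ℕ) : Fin n)) ∩
        seg (p ((zigN n l.val : ℕ) : Fin n)) (p ((zigN n (l.val + 1) : ℕ) : Fin n)) ⊆ _
    rcases Nat.lt_or_ge k.val l.val with h | h
    · exact zig_nc_lt hn pinj hCI hsimple hk hl h
    · have h' : l.val < k.val := by
        rcases Nat.lt_or_ge l.val k.val with h' | h'
        · exact h'
        · exact absurd (Fin.ext (by omega)) hkl
      exact nc_swap (zig_nc_lt hn pinj hCI hsimple hl hk h')
  · -- non-crossing with boundary edges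
    intro k i
    have hk := k.isLt
    obtain ⟨_, hadjAB, _⟩ := zig_fin_facts (n := n) hn hk
    have hne : ((zigN n k.val : ℕ) : Fin n) ≠ ((zigN n (k.val + 1) : ℕ) : Fin n) :=
      zf_ne hn (by omega) (by omega) (by omega)
    have hnadj : ¬ adjV ((zigN n k.val : ℕ) : Fin n) ((zigN n (k.val + 1) : ℕ) : Fin n) := by
      rcases zig_edge (n := n) hn hk with ⟨h1, h2⟩ | ⟨h1, h2⟩
      · rw [h1, h2]; exact hadjAB
      · rw [h1, h2]; exact fun h => hadjAB (adjV_symm h)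
    exact chord_edge hn pinj hCI hsimple _ _ hne hnadj i

end Aux


/-- A maximum-size path graph planarly polygon-embeddable in a convex polygon with `n ≥ 3`
vertices has exactly `n - 3` edges: a path with `n - 3` edges embeds, and no path with more
edges does. -/
theorem stmt_14 (n : ℕ) [NeZero n] (hn : 3 ≤ n)
    (p : Fin n → Pt) (hP : IsConvexPolygon p) :
    (∃ f : Fin ((n - 3) + 1) → Fin n, IsPathEmbedding p f) ∧
    (∀ (e : ℕ) (f : Fin (e + 1) → Fin n), IsPathEmbedding p f → e ≤ n - 3) := by
  exact ⟨Aux.construction hn p hP, fun e f hf => Aux.upper hn p hP e f hf⟩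
end
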